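/- arXiv:2403.02105 — 7 statements merged into one kernel-verified Lean document; each statement's English description precedes it below -/
import Mathlib

section
/- Let A be a ring and let L --g--> M --f--> N be a complex of A-modules (i.e. f ∘ g = 0), where L, M, N are each equipped with an increasing ℤ-indexed filtration by submodules (F_α L)_{α∈ℤ}, (F_α M)_{α∈ℤ}, (F_α N)_{α∈ℤ}, and g and f are filtered, i.e. g(F_α L) ⊆ F_α M and f(F_α M) ⊆ F_α N for all α. Assume the filtration on M is exhaustive (⋃_{α∈ℤ} F_α M = M) and that the associated graded sequence is exact, in the sense that for every α ∈ ℤ and every m ∈ F_α M with f(m) ∈ F_{α−1} N there exists l ∈ F_α L with m − g(l) ∈ F_{α−1} M. Then f is strict: for every α ∈ ℤ, f(M) ∩ F_α N = f(F_α M). -/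
/-- **Strictness from graded exactness** (Kouchnirenko, Lemma 4.3).
Let `L --g--> M --f--> N` be a complex of `A`-modules equipped with increasing
`ℤ`-indexed filtrations, with `g` and `f` filtered maps.  If the filtration on `M`
is exhaustive and the associated graded sequence is exact, then `f` is strict:
`f(M) ∩ F_α N = f(F_α M)` for every `α`. -/
theorem strict_of_graded_exact {A L M N : Type*} [Ring A]
    [AddCommGroup L] [Module A L] [AddCommGroup M] [Module A M]
    [AddCommGroup N] [Module A N]
    (g : L →ₗ[A] M) (f : M →ₗ[A] N)
    (hfg : ∀ l : L, f (g l) = 0)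
    (FL : ℤ → Submodule A L) (FM : ℤ → Submodule A M) (FN : ℤ → Submodule A N)
    (hFL : Monotone FL) (hFM : Monotone FM) (hFN : Monotone FN)
    (hg : ∀ α : ℤ, (FL α).map g ≤ FM α)
    (hf : ∀ α : ℤ, (FM α).map f ≤ FN α)
    (hexh : ∀ m : M, ∃ α : ℤ, m ∈ FM α)
    (hgr : ∀ α : ℤ, ∀ m ∈ FM α, f m ∈ FN (α - 1) →
      ∃ l ∈ FL α, m - g l ∈ FM (α - 1)) :
    ∀ α : ℤ, LinearMap.range f ⊓ FN α = (FM α).map f := by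
  intro α
  apply le_antisymm
  · rintro n ⟨⟨m, rfl⟩, hn⟩
    obtain ⟨β, hm⟩ := hexh m
    -- descend from β to α
    have key : ∀ k : ℕ, ∀ m : M, m ∈ FM (α + k) → f m ∈ FN α →
        ∃ m' ∈ FM α, f m' = f m := by
      intro k
      induction k with
      | zero => intro m hm hn; exact ⟨m, by simpa using hm, rfl⟩
      | succ k ih =>
        intro m hm hn
        have hn' : f m ∈ FN (α + (k + 1) - 1) :=
          hFN (by omega : α ≤ α + ((k : ℤ) + 1) - 1) hn
        obtain ⟨l, hl, hml⟩ := hgr (α + (k + 1)) m (by exact_mod_cast hm) hn'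
        have hfm : f (m - g l) = f m := by simp [map_sub, hfg]
        have hmem : m - g l ∈ FM (α + k) := by
          have : (α + ((k : ℤ) + 1) - 1) = α + k := by push_cast; ring
          rwa [this] at hml
        obtain ⟨m', hm', hfm'⟩ := ih (m - g l) hmem (hfm ▸ hn)
        exact ⟨m', hm', by rw [hfm', hfm]⟩
    rcases le_or_gt β α with h | h
    · exact ⟨m, hFM h hm, rfl⟩
    · obtain ⟨m', hm', hfm'⟩ := key (β - α).toNat m
        (by rwa [show α + ((β - α).toNat : ℤ) = β by omega]) hn
      exact ⟨m', hm', hfm'⟩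
  · rintro n ⟨m, hm, rfl⟩
    exact ⟨⟨m, rfl⟩, hf α ⟨m, hm, rfl⟩⟩
end

section
/- Let K be a field, H a finite-dimensional K-vector space, N : H → H a nilpotent linear endomorphism, and (Φ_i)_{i∈ℤ} an increasing ℤ-indexed filtration of H by subspaces which is separated (Φ_i = 0 for i sufficiently small) and exhaustive (Φ_i = H for i sufficiently large), such that N(Φ_i) ⊆ Φ_{i+1} for all i. Suppose that for every integer j ≥ 0 the map N^j is strict with respect to the shifted filtrations, i.e. range(N^j) ∩ Φ_{i+j} = N^j(Φ_i) for all i ∈ ℤ. Then there exists a family of subspaces (I_i)_{i∈ℤ} of H, all but finitely many zero, such that H is the internal direct sum of the I_i, Φ_k = Σ_{i ≤ k} I_i for every k ∈ ℤ, and N(I_i) ⊆ I_{i+1} for every i. -/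
open Submodule

section SplittingAux

variable {K H : Type*} [Field K] [AddCommGroup H] [Module K H]
lemma aux_exists_compl_le (U V : Submodule K H) :
    ∃ C : Submodule K H, C ≤ V ∧ C ⊓ U = ⊥ ∧ U ⊔ C = U ⊔ V := by
  obtain ⟨q, hq⟩ := Submodule.exists_isCompl ((U ⊓ V).comap V.subtype)
  refine ⟨q.map V.subtype, Submodule.map_subtype_le V q, ?_, ?_⟩
  · rw [eq_bot_iff]
    rintro x ⟨hxC, hxU⟩
    obtain ⟨v, hv, rfl⟩ := hxC
    have hvW : v ∈ (U ⊓ V).comap V.subtype :=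
      Submodule.mem_comap.mpr (Submodule.mem_inf.mpr ⟨hxU, v.2⟩)
    have hb : v ∈ ((U ⊓ V).comap V.subtype) ⊓ q := Submodule.mem_inf.mpr ⟨hvW, hv⟩
    rw [hq.inf_eq_bot] at hb
    have : v = 0 := by simpa using hb
    simp [this]
  · apply le_antisymm
    · exact sup_le le_sup_left (le_trans (Submodule.map_subtype_le V q) le_sup_right)
    · refine sup_le le_sup_left ?_
      intro v hv
      have : (⟨v, hv⟩ : V) ∈ ((U ⊓ V).comap V.subtype) ⊔ q := by
        rw [hq.sup_eq_top]; trivial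
      obtain ⟨w, hw, c, hc, hwc⟩ := Submodule.mem_sup.mp this
      have hveq : v = (w : H) + (c : H) := by
        have := congrArg (V.subtype) hwc; simpa using this.symm
      rw [hveq]
      refine Submodule.add_mem _ ?_ ?_
      · exact (le_sup_left : U ≤ U ⊔ q.map V.subtype) (Submodule.mem_inf.mp (Submodule.mem_comap.mp hw)).1
      · exact (le_sup_right : q.map V.subtype ≤ U ⊔ q.map V.subtype) ⟨c, hc, rfl⟩
lemma aux_inner (D : Submodule K H) (e : ℕ) :
    ∀ (A B : ℕ → Submodule K H),
      (∀ p, A (p+1) ≤ A p) → (∀ p, B (p+1) ≤ B p) →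
      A e = ⊥ →
      (∀ p, A p ≤ B p ⊔ (D ⊓ A p)) →
      (∀ p, A p ⊓ B 0 ≤ B p) →
      ∃ I : Submodule K H, I ≤ D ⊓ A 0 ∧ I ⊓ B 0 = ⊥ ∧ ∀ p, A p ≤ B p ⊔ I := by
  induction e with
  | zero =>
    intro A B hA hB hAe _ _
    have hA0 : ∀ p, A p ≤ A 0 := by
      intro p; induction p with
      | zero => exact le_rfl
      | succ q ih => exact (hA q).trans ih
    refine ⟨⊥, bot_le, by simp, fun p => ?_⟩
    exact le_trans (le_trans (hA0 p) (le_of_eq hAe)) (le_trans bot_le le_sup_left)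
  | succ e ih =>
    intro A B hA hB hAe hABD hAB0
    obtain ⟨I', hI'le, hI'B, hI'sup⟩ :=
      ih (fun p => A (p+1)) (fun p => B (p+1)) (fun p => hA (p+1)) (fun p => hB (p+1))
        hAe (fun p => hABD (p+1))
        (fun p => le_trans (inf_le_inf_left _ (hB 0)) (hAB0 (p+1)))
    obtain ⟨C, hCle, hCint, hCsup⟩ := aux_exists_compl_le (B 0 ⊔ I') (D ⊓ A 0)
    refine ⟨I' ⊔ C, ?_, ?_, ?_⟩
    · exact sup_le (hI'le.trans (inf_le_inf_left _ (hA 0))) hCle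
    · rw [eq_bot_iff]
      rintro x ⟨hxI, hxB⟩
      obtain ⟨y, hy, c, hc, rfl⟩ := Submodule.mem_sup.mp hxI
      have hcmem : c ∈ C ⊓ (B 0 ⊔ I') := by
        refine ⟨hc, ?_⟩
        have : c = (y + c) - y := by abel
        rw [this]
        exact Submodule.sub_mem _ ((le_sup_left : B 0 ≤ B 0 ⊔ I') hxB)
          ((le_sup_right : I' ≤ B 0 ⊔ I') hy)
      rw [hCint] at hcmem
      have hc0 : c = 0 := by simpa using hcmem
      subst hc0
      have hyB : y ∈ B 0 := by simpa using hxB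
      have hyB1 : y ∈ B 1 := hAB0 1 ⟨(hI'le.trans inf_le_right) hy, hyB⟩
      have : y ∈ I' ⊓ B 1 := ⟨hy, hyB1⟩
      rw [hI'B] at this
      simpa using this
    · intro p
      cases p with
      | zero =>
        have h1 : D ⊓ A 0 ≤ (B 0 ⊔ I') ⊔ C := by rw [hCsup]; exact le_sup_right
        calc A 0 ≤ B 0 ⊔ (D ⊓ A 0) := hABD 0
          _ ≤ B 0 ⊔ ((B 0 ⊔ I') ⊔ C) := sup_le_sup_left h1 _
          _ ≤ B 0 ⊔ (I' ⊔ C) := by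
              refine sup_le le_sup_left (sup_le (sup_le le_sup_left ?_) ?_)
              · exact le_trans (le_sup_left : I' ≤ I' ⊔ C) le_sup_right
              · exact le_trans (le_sup_right : C ≤ I' ⊔ C) le_sup_right
      | succ q =>
        exact le_trans (hI'sup q) (sup_le_sup_left (le_sup_left : I' ≤ I' ⊔ C) _)

variable (N : H →ₗ[K] H) (Φ : ℤ → Submodule K H)
lemma aux_map_pow_le (hmono : Monotone Φ) (hNΦ : ∀ i : ℤ, (Φ i).map N ≤ Φ (i + 1)) :
    ∀ (p : ℕ) (j : ℤ), (Φ j).map (N ^ p) ≤ Φ (j + p) := by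
  intro p
  induction p with
  | zero => intro j; simp [Module.End.one_eq_id]
  | succ q ih =>
    intro j
    have h1 : (N : H →ₗ[K] H) ^ (q+1) = (N ^ q) ∘ₗ N := by
      rw [pow_succ, Module.End.mul_eq_comp]
    rw [h1, Submodule.map_comp]
    refine le_trans (Submodule.map_mono (hNΦ j)) ?_
    refine le_trans (ih (j+1)) (hmono ?_)
    push_cast; omega
lemma aux_step (hmono : Monotone Φ) (hNΦ : ∀ i : ℤ, (Φ i).map N ≤ Φ (i + 1))
    (hstrict : ∀ j : ℕ, ∀ i : ℤ,
      LinearMap.range (N ^ j) ⊓ Φ (i + j) = (Φ i).map (N ^ j))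
    (e : ℕ) (hNe : N ^ e = 0) (i : ℤ) (P : Submodule K H)
    (hinv : ∀ q : ℕ, 1 ≤ q →
      (Φ (i + 1 - q)).map (N ^ q) ≤ (Φ (i - q)).map (N ^ q) ⊔ P) :
    ∃ I : Submodule K H,
      I ≤ Φ i ⊓ Submodule.comap N P ∧
      I ⊓ Φ (i - 1) = ⊥ ∧
      (∀ q : ℕ, (Φ (i - q)).map (N ^ q) ≤ (Φ (i - 1 - q)).map (N ^ q) ⊔ I) := by
  have hApow : ∀ p : ℕ, (N : H →ₗ[K] H) ^ (p+1) = (N ^ p) ∘ₗ N := by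
    intro p; rw [pow_succ, Module.End.mul_eq_comp]
  have happ : ∀ (p : ℕ) (z : H), N ((N ^ p) z) = (N ^ (p+1)) z := by
    intro p z; rw [pow_succ']; rfl
  set D : Submodule K H := Φ i ⊓ Submodule.comap N P with hD
  set A : ℕ → Submodule K H := fun p => (Φ (i - p)).map (N ^ p) with hA
  set B : ℕ → Submodule K H := fun p => (Φ (i - 1 - p)).map (N ^ p) with hB
  have hAanti : ∀ p, A (p+1) ≤ A p := by
    intro p
    show (Φ (i - (p+1:ℕ))).map (N ^ (p+1)) ≤ (Φ (i - p)).map (N ^ p)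
    rw [hApow, Submodule.map_comp]
    refine Submodule.map_mono (le_trans (hNΦ _) (hmono ?_))
    push_cast; omega
  have hBanti : ∀ p, B (p+1) ≤ B p := by
    intro p
    show (Φ (i - 1 - (p+1:ℕ))).map (N ^ (p+1)) ≤ (Φ (i - 1 - p)).map (N ^ p)
    rw [hApow, Submodule.map_comp]
    refine Submodule.map_mono (le_trans (hNΦ _) (hmono ?_))
    push_cast; omega
  have hAe : A e = ⊥ := by
    show (Φ (i - e)).map (N ^ e) = ⊥
    rw [hNe]
    exact Submodule.map_zero _
  have hB0 : B 0 = Φ (i - 1) := by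
    show (Φ (i - 1 - (0:ℕ))).map (N ^ 0) = Φ (i - 1)
    simp [Module.End.one_eq_id]
  have hAB0 : ∀ p, A p ⊓ B 0 ≤ B p := by
    intro p
    rw [hB0]
    show (Φ (i - p)).map (N ^ p) ⊓ Φ (i - 1) ≤ (Φ (i - 1 - p)).map (N ^ p)
    have h1 : Φ (i - 1) = Φ ((i - 1 - p) + p) := by congr 1; ring
    rw [h1, ← hstrict p (i - 1 - p)]
    exact inf_le_inf_right _ (LinearMap.map_le_range)
  have hABD : ∀ p, A p ≤ B p ⊔ (D ⊓ A p) := by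
    intro p
    rintro x hx
    obtain ⟨v, hv, rfl⟩ := hx
    -- use the invariant with power p+1
    have hv' : v ∈ Φ (i + 1 - ((p:ℕ)+1:ℕ)) := by
      have : i + 1 - ((p:ℕ)+1:ℕ) = i - p := by push_cast; ring
      rw [this]; exact hv
    have hmem : (N ^ (p+1)) v ∈ (Φ (i - ((p:ℕ)+1:ℕ))).map (N ^ (p+1)) ⊔ P :=
      hinv (p+1) (by omega) ⟨v, hv', rfl⟩
    obtain ⟨w, hw, u, hu, huw⟩ := Submodule.mem_sup.mp hmem
    obtain ⟨y, hy, rfl⟩ := hw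
    have hyΦ : y ∈ Φ (i - 1 - p) := by
      have : i - ((p:ℕ)+1:ℕ) = i - 1 - p := by push_cast; ring
      rw [← this]; exact hy
    set cc := (N ^ p) v - (N ^ p) y with hcc
    have hccA : cc ∈ A p := by
      refine ⟨v - y, ?_, ?_⟩
      · exact Submodule.sub_mem _ hv (hmono (by omega : i - 1 - (p:ℤ) ≤ i - p) hyΦ)
      · simp [hcc]
    have hccΦi : cc ∈ Φ i := by
      have := aux_map_pow_le N Φ hmono hNΦ p (i - p) hccA
      have h2 : i - (p:ℤ) + p = i := by ring
      rwa [h2] at this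
    have hccP : cc ∈ Submodule.comap N P := by
      have hN : N cc = u := by
        have h3 : N ((N ^ p) v) = (N ^ (p+1)) v := happ p v
        have h4 : N ((N ^ p) y) = (N ^ (p+1)) y := happ p y
        have : N cc = (N ^ (p+1)) v - (N ^ (p+1)) y := by
          rw [hcc, map_sub, h3, h4]
        rw [this, ← huw]; abel
      simpa [Submodule.mem_comap, hN] using hu
    refine Submodule.mem_sup.mpr ⟨(N ^ p) y, ⟨y, hyΦ, rfl⟩, cc, ⟨⟨hccΦi, hccP⟩, hccA⟩, ?_⟩
    simp [hcc]
  obtain ⟨I, hIle, hIB, hIsup⟩ := aux_inner D e A B hAanti hBanti hAe hABD hAB0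
  refine ⟨I, le_trans hIle inf_le_left, ?_, ?_⟩
  · rw [← hB0]; exact hIB
  · intro q; exact hIsup q
lemma aux_outer (hmono : Monotone Φ) (hNΦ : ∀ i : ℤ, (Φ i).map N ≤ Φ (i + 1))
    (hstrict : ∀ j : ℕ, ∀ i : ℤ,
      LinearMap.range (N ^ j) ⊓ Φ (i + j) = (Φ i).map (N ^ j))
    (e : ℕ) (hNe : N ^ e = 0)
    (b : ℤ) (hb : ∀ i : ℤ, b ≤ i → Φ i = ⊤) (n : ℕ) :
    ∃ J : ℤ → Submodule K H,
      (∀ j : ℤ, j ≤ (b + e) - n → J j = ⊥) ∧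
      (∀ j : ℤ, b + e < j → J j = ⊥) ∧
      (∀ j : ℤ, (b + e) - n < j → J j ≤ Φ j ⊓ Submodule.comap N (J (j+1))) ∧
      (∀ j : ℤ, (b + e) - n < j → J j ⊓ Φ (j-1) = ⊥) ∧
      (∀ j : ℤ, (b + e) - n < j → Φ j ≤ Φ (j-1) ⊔ J j) ∧
      (∀ q : ℕ, 1 ≤ q →
        (Φ ((b + e) - n + 1 - q)).map (N ^ q) ≤
          (Φ ((b + e) - n - q)).map (N ^ q) ⊔ J ((b + e) - n + 1)) := by
  set c : ℤ := b + e with hc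
  induction n with
  | zero =>
    refine ⟨fun _ => ⊥, fun _ _ => rfl, fun _ _ => rfl, ?_, ?_, ?_, ?_⟩
    · intro j hj; simp
    · intro j hj; simp
    · intro j hj
      have h1 : Φ j = ⊤ := hb j (by omega)
      have h2 : Φ (j-1) = ⊤ := hb (j-1) (by omega)
      rw [h1, h2]; exact le_sup_left
    · intro q hq
      simp only [Nat.cast_zero, sub_zero]
      by_cases hqe : e ≤ q
      · have : (N : H →ₗ[K] H) ^ q = 0 := by
          obtain ⟨r, hr⟩ := Nat.exists_eq_add_of_le hqe
          rw [hr, pow_add, hNe, zero_mul]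
        rw [this, Submodule.map_zero]
        exact bot_le
      · push_neg at hqe
        have h1 : Φ (c + 1 - q) = ⊤ := hb _ (by push_cast; omega)
        have h2 : Φ (c - q) = ⊤ := hb _ (by push_cast; omega)
        rw [h1, h2]
        exact le_sup_left
  | succ n ih =>
    obtain ⟨J, hbot, htop, hle, hint, hsup, hinv⟩ := ih
    have hidx : c - (n:ℤ) = c - (n+1:ℕ) + 1 := by push_cast; ring
    obtain ⟨I, hIle, hIint, hIsup⟩ :=
      aux_step N Φ hmono hNΦ hstrict e hNe (c - n) (J (c - n + 1)) hinv
    set i₀ : ℤ := c - n with hi₀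
    refine ⟨fun j => if j = i₀ then I else J j, ?_, ?_, ?_, ?_, ?_, ?_⟩ <;> beta_reduce
    · intro j hj
      rw [if_neg (by omega : ¬ j = i₀)]
      exact hbot j (by push_cast at hj ⊢; omega)
    · intro j hj
      rw [if_neg (by omega : ¬ j = i₀)]
      exact htop j hj
    · intro j hj
      by_cases hji : j = i₀
      · subst hji
        rw [if_pos rfl, if_neg (by omega : ¬ i₀ + 1 = i₀)]
        exact hIle
      · rw [if_neg hji, if_neg (by push_cast at hj; omega : ¬ j + 1 = i₀)]
        exact hle j (by push_cast at hj ⊢; omega)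
    · intro j hj
      by_cases hji : j = i₀
      · subst hji; rw [if_pos rfl]; exact hIint
      · rw [if_neg hji]; exact hint j (by push_cast at hj ⊢; omega)
    · intro j hj
      by_cases hji : j = i₀
      · subst hji; rw [if_pos rfl]
        have h0 := hIsup 0
        simpa [Module.End.one_eq_id] using h0
      · rw [if_neg hji]; exact hsup j (by push_cast at hj ⊢; omega)
    · intro q hq
      have hidx1 : c - ((n:ℤ)+1) + 1 = i₀ := by push_cast; ring
      rw [if_pos (by push_cast; omega : c - ((n+1:ℕ):ℤ) + 1 = i₀)]
      have h1 : c - ((n+1:ℕ):ℤ) + 1 - q = i₀ - q := by push_cast; ring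
      have h2 : c - ((n+1:ℕ):ℤ) - q = i₀ - 1 - q := by push_cast; ring
      rw [h1, h2]
      exact hIsup q

end SplittingAux

/-- **Splitting of a strictly filtered nilpotent endomorphism**
(M. Saito, Proposition 3.7; consequence).  Let `H` be a finite-dimensional
vector space, `N` a nilpotent endomorphism, and `Φ` an increasing, separated,
exhaustive `ℤ`-indexed filtration with `N (Φ i) ⊆ Φ (i+1)`, such that every
power `N^j` is strict for the shifted filtrations.  Then there is a family of
subspaces `I i`, all but finitely many zero, with `H = ⊕ᵢ I i`,
`Φ k = Σ_{i ≤ k} I i`, and `N (I i) ⊆ I (i+1)`. -/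
theorem exists_splitting_of_strict_nilpotent
    {K H : Type*} [Field K] [AddCommGroup H] [Module K H]
    [FiniteDimensional K H]
    (N : H →ₗ[K] H) (hN : IsNilpotent N)
    (Φ : ℤ → Submodule K H) (hmono : Monotone Φ)
    (hsep : ∃ a : ℤ, ∀ i ≤ a, Φ i = ⊥)
    (hexh : ∃ b : ℤ, ∀ i : ℤ, b ≤ i → Φ i = ⊤)
    (hNΦ : ∀ i : ℤ, (Φ i).map N ≤ Φ (i + 1))
    (hstrict : ∀ j : ℕ, ∀ i : ℤ,
      LinearMap.range (N ^ j) ⊓ Φ (i + j) = (Φ i).map (N ^ j)) :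
    ∃ I : ℤ → Submodule K H,
      {i : ℤ | I i ≠ ⊥}.Finite ∧
      DirectSum.IsInternal I ∧
      (∀ k : ℤ, Φ k = ⨆ i ≤ k, I i) ∧
      (∀ i : ℤ, (I i).map N ≤ I (i + 1)) := by

  obtain ⟨a, ha⟩ := hsep
  obtain ⟨b, hb⟩ := hexh
  obtain ⟨e, hNe⟩ := hN
  set c : ℤ := b + e with hc
  set m : ℕ := (c - a).toNat with hm
  have hcm : c - (m:ℤ) ≤ a := by omega
  obtain ⟨J, hbot, htop, hle, hint, hsup, _⟩ :=
    aux_outer N Φ hmono hNΦ hstrict e hNe b hb m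
  have hJΦ : ∀ j : ℤ, J j ≤ Φ j := by
    intro j
    by_cases h : c - (m:ℤ) < j
    · exact (hle j h).trans inf_le_left
    · rw [hbot j (by omega)]; exact bot_le
  -- the filtration is the partial sup of the J's
  have hsupkle : ∀ k : ℤ, (⨆ i, ⨆ _ : i ≤ k, J i) ≤ Φ k := by
    intro k
    exact iSup₂_le fun i hik => (hJΦ i).trans (hmono hik)
  have hstep2 : ∀ d : ℕ, Φ (c - (m:ℤ) + d) ≤ ⨆ i, ⨆ _ : i ≤ c - (m:ℤ) + (d:ℤ), J i := by
    intro d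
    induction d with
    | zero =>
      simp only [Nat.cast_zero, add_zero]
      rw [ha (c - (m:ℤ)) (by omega)]
      exact bot_le
    | succ d ih =>
      have h5 := hsup (c - (m:ℤ) + d + 1) (by push_cast; omega)
      have hidx : c - (m:ℤ) + d + 1 - 1 = c - (m:ℤ) + d := by ring
      rw [hidx] at h5
      have hidx2 : c - (m:ℤ) + ((d:ℕ)+1:ℕ) = c - (m:ℤ) + d + 1 := by push_cast; ring
      rw [hidx2]
      refine le_trans h5 (sup_le (le_trans ih ?_) ?_)
      · exact iSup₂_le fun i hi => le_iSup₂ (f := fun i _ => J i) i (by omega)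
      · exact le_iSup₂ (f := fun i _ => J i) (c - (m:ℤ) + d + 1) (by omega)
  have hΦsup : ∀ k : ℤ, Φ k = ⨆ i, ⨆ _ : i ≤ k, J i := by
    intro k
    refine le_antisymm ?_ (hsupkle k)
    by_cases hk : k ≤ c - (m:ℤ)
    · rw [ha k (by omega)]; exact bot_le
    · have : k = c - (m:ℤ) + ((k - (c - (m:ℤ))).toNat : ℤ) := by omega
      rw [this]
      exact hstep2 _
  -- disjointness claim
  set T : ℤ → Submodule K H := fun k => ⨆ j, ⨆ _ : k < j, J j with hT
  have htopS : ∀ k : ℤ, c ≤ k → T k = ⊥ := by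
    intro k hk
    rw [eq_bot_iff]
    exact iSup₂_le fun j hj => le_of_eq (htop j (by omega))
  have hstepS : ∀ k : ℤ, Φ (k+1) ⊓ T (k+1) = ⊥ → Φ k ⊓ T k = ⊥ := by
    intro k hk1
    rw [eq_bot_iff]
    rintro x ⟨hxΦ, hxT⟩
    have hTle : T k ≤ J (k+1) ⊔ T (k+1) := by
      refine iSup₂_le fun j hj => ?_
      rcases eq_or_lt_of_le (by omega : k + 1 ≤ j) with h | h
      · rw [← h]; exact le_sup_left
      · exact le_trans (le_iSup₂ (f := fun j _ => J j) j h) le_sup_right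
    obtain ⟨y, hy, z, hz, hxyz⟩ := Submodule.mem_sup.mp (hTle hxT)
    have hzmem : z ∈ Φ (k+1) ⊓ T (k+1) := by
      refine ⟨?_, hz⟩
      have hzeq : z = x - y := by rw [← hxyz]; abel
      rw [hzeq]
      exact Submodule.sub_mem _ (hmono (by omega : k ≤ k+1) hxΦ)
        ((hJΦ (k+1)).trans (hmono (le_refl (k+1))) hy)
    rw [hk1] at hzmem
    have hz0 : z = 0 := by simpa using hzmem
    have hxy : x = y := by rw [← hxyz, hz0, add_zero]
    by_cases hkc : c - (m:ℤ) < k + 1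
    · have hd := hint (k+1) hkc
      have hidx : k + 1 - 1 = k := by ring
      rw [hidx] at hd
      have hmem2 : x ∈ J (k+1) ⊓ Φ k := ⟨hxy ▸ hy, hxΦ⟩
      rw [hd] at hmem2
      simpa using hmem2
    · have : J (k+1) = ⊥ := hbot (k+1) (by omega)
      rw [this] at hy
      have : y = 0 := by simpa using hy
      simp [hxy, this]
  have hclaim : ∀ d : ℕ, ∀ k : ℤ, c - (d:ℤ) ≤ k → Φ k ⊓ T k = ⊥ := by
    intro d
    induction d with
    | zero =>
      intro k hk
      rw [htopS k (by omega)]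
      simp
    | succ d ih =>
      intro k hk
      by_cases h : c - (d:ℤ) ≤ k
      · exact ih k h
      · exact hstepS k (ih (k+1) (by push_cast at hk h ⊢; omega))
  have hS : ∀ k : ℤ, Φ k ⊓ T k = ⊥ := fun k => hclaim (c - k).toNat k (by omega)
  -- independence
  have hindep : iSupIndep J := by
    intro k
    rw [Submodule.disjoint_def]
    intro x hxk hxrest
    have hrle : (⨆ j, ⨆ _ : j ≠ k, J j) ≤ Φ (k-1) ⊔ T k := by
      refine iSup₂_le fun j hj => ?_
      rcases lt_or_gt_of_ne hj with h | h
      · exact le_trans ((hJΦ j).trans (hmono (by omega : j ≤ k - 1)))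
          le_sup_left
      · exact le_trans (le_iSup₂ (f := fun j _ => J j) j h) le_sup_right
    obtain ⟨y, hy, z, hz, hxyz⟩ := Submodule.mem_sup.mp (hrle hxrest)
    have hzmem : z ∈ Φ k ⊓ T k := by
      refine ⟨?_, hz⟩
      have hzeq : z = x - y := by rw [← hxyz]; abel
      rw [hzeq]
      exact Submodule.sub_mem _ (hJΦ k hxk) (hmono (by omega : k - 1 ≤ k) hy)
    rw [hS k] at hzmem
    have hz0 : z = 0 := by simpa using hzmem
    have hxy : x = y := by rw [← hxyz, hz0, add_zero]
    by_cases hkc : c - (m:ℤ) < k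
    · have hd := hint k hkc
      have hmem2 : x ∈ J k ⊓ Φ (k-1) := ⟨hxk, hxy ▸ hy⟩
      rw [hd] at hmem2
      simpa using hmem2
    · have hbk : J k = ⊥ := hbot k (by omega)
      rw [hbk] at hxk
      simpa using hxk
  -- sup is top
  have hsuptop : iSup J = ⊤ := by
    rw [eq_top_iff]
    have h1 : Φ c = ⊤ := hb c (by omega)
    rw [← h1, hΦsup c]
    exact iSup₂_le fun i _ => le_iSup J i
  refine ⟨J, ?_, ?_, hΦsup, ?_⟩
  · refine Set.Finite.subset (Set.finite_Ioc (c - (m:ℤ)) c) ?_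
    intro j hj
    simp only [Set.mem_setOf_eq] at hj
    by_contra hcon
    simp only [Set.mem_Ioc, not_and_or, not_lt, not_le] at hcon
    rcases hcon with h | h
    · exact hj (hbot j (by omega))
    · exact hj (htop j (by omega))
  · exact DirectSum.isInternal_submodule_of_iSupIndep_of_iSup_eq_top hindep hsuptop
  · intro j
    by_cases h : c - (m:ℤ) < j
    · exact Submodule.map_le_iff_le_comap.mpr ((hle j h).trans inf_le_right)
    · rw [hbot j (by omega)]
      simp
end

section
/- Let K be a field, H a finite-dimensional K-vector space, N : H → H a nilpotent linear endomorphism, and (Φ_i)_{i∈ℤ} an increasing ℤ-indexed filtration of H by subspaces which is separated (Φ_i = 0 for i sufficiently small) and exhaustive (Φ_i = H for i sufficiently large), such that N(Φ_i) ⊆ Φ_{i+1} for all i. Suppose that for every integer j ≥ 0, range(N^j) ∩ Φ_{i+j} = N^j(Φ_i) for all i ∈ ℤ. Then there exist a finite index set ι, vectors e : ι → H, integers p : ι → ℤ, and positive natural numbers m : ι → ℕ such that: (a) the family of vectors N^k(e_i) for i ∈ ι and 0 ≤ k < m_i is a basis of H; (b) N^{m_i}(e_i) = 0 for every i; and (c)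 for every j ∈ ℤ, Φ_j is the linear span of the vectors N^k(e_i) with i ∈ ι, 0 ≤ k < m_i and p_i + k ≤ j. In other words, (H, Φ_•, N) is isomorphic to a direct sum of copies of (K[N]/(N^{m}), F_{•−p}, N), where F_k K[N]/(N^m) = span{1, N, …, N^k}. -/
universe u v

open Submodule Set

section JordanAux

variable {K : Type v} [Field K]

/-- The conclusion of the Jordan-type decomposition theorem, abstracted so that it can
be proved by induction on the dimension. -/
def JordanStmt {H : Type u} [AddCommGroup H] [Module K H]
    (N : H →ₗ[K] H) (Φ : ℤ → Submodule K H) : Prop :=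
  ∃ (ι : Type) (_ : Fintype ι) (e : ι → H) (p : ι → ℤ) (m : ι → ℕ),
      (∀ i : ι, 0 < m i) ∧
      LinearIndependent K
        (fun x : Σ i : ι, Fin (m i) => (N ^ (x.2 : ℕ)) (e x.1)) ∧
      Submodule.span K
        (Set.range (fun x : Σ i : ι, Fin (m i) => (N ^ (x.2 : ℕ)) (e x.1))) = ⊤ ∧
      (∀ i : ι, (N ^ (m i)) (e i) = 0) ∧
      (∀ j : ℤ, Φ j = Submodule.span K
        {h : H | ∃ (i : ι) (k : ℕ), k < m i ∧ p i + (k : ℤ) ≤ j ∧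
          h = (N ^ k) (e i)})

/-- The trivial case of a zero space. -/
theorem jordanStmt_of_subsingleton {H : Type u} [AddCommGroup H] [Module K H]
    (hss : Subsingleton H) (N : H →ₗ[K] H) (Φ : ℤ → Submodule K H) :
    JordanStmt N Φ := by
  refine ⟨Empty, inferInstance, Empty.elim, Empty.elim, Empty.elim, fun i => i.elim,
    ?_, ?_, fun i => i.elim, fun j => ?_⟩
  · exact linearIndependent_empty_type
  · exact Subsingleton.elim _ _
  · exact Subsingleton.elim _ _

/-- Saito's proposition, proved by induction on the dimension. -/
theorem jordan_aux (n : ℕ) :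
    ∀ (H : Type u) [AddCommGroup H] [Module K H] [FiniteDimensional K H],
    Module.finrank K H ≤ n →
    ∀ (N : H →ₗ[K] H), IsNilpotent N →
    ∀ (Φ : ℤ → Submodule K H), Monotone Φ →
    (∃ a : ℤ, ∀ i ≤ a, Φ i = ⊥) →
    (∃ b : ℤ, ∀ i : ℤ, b ≤ i → Φ i = ⊤) →
    (∀ i : ℤ, (Φ i).map N ≤ Φ (i + 1)) →
    (∀ j : ℕ, ∀ i : ℤ,
      LinearMap.range (N ^ j) ⊓ Φ (i + j) = (Φ i).map (N ^ j)) →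
    JordanStmt N Φ := by
  induction n with
  | zero =>
    intro H _ _ _ hrank N hN Φ hmono hsep hexh hNΦ hstrict
    have h0 : Module.finrank K H = 0 := Nat.le_zero.mp hrank
    exact jordanStmt_of_subsingleton ((Module.finrank_zero_iff (R := K)).mp h0) N Φ
  | succ n IH =>
    intro H _ _ _ hrank N hN Φ hmono hsep hexh hNΦ hstrict
    by_cases hns : Subsingleton H
    · exact jordanStmt_of_subsingleton hns N Φ
    have hnt : Nontrivial H := not_subsingleton_iff_nontrivial.mp hns

    classical
    -- ===== Step 1 : the nilpotency index m and the minimal level p =====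
    have hex : ∃ k : ℕ, N ^ k = 0 := hN
    set m : ℕ := Nat.find hex with hmdef
    have hm0 : N ^ m = 0 := Nat.find_spec hex
    have hmpos : 0 < m := by
      rcases Nat.eq_zero_or_pos m with h | h
      · exfalso
        have h0 := hm0
        rw [h, pow_zero] at h0
        obtain ⟨x, hx⟩ := exists_ne (0 : H)
        exact hx (by simpa using LinearMap.congr_fun h0 x)
      · exact h
    have hm1 : N ^ (m - 1) ≠ 0 := Nat.find_min hex (by omega)
    have mapNpow : ∀ (s : ℕ) (j : ℤ) (x : H), x ∈ Φ j → (N ^ s) x ∈ Φ (j + s) := by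
      intro s
      induction s with
      | zero => intro j x hx; simpa using hx
      | succ s ih =>
        intro j x hx
        have h1 : (N ^ (s + 1)) x = N ((N ^ s) x) := by
          rw [pow_succ']; rfl
        have h2 : N ((N ^ s) x) ∈ Φ (j + s + 1) := hNΦ _ ⟨_, ih j x hx, rfl⟩
        rw [h1]
        convert h2 using 2
        push_cast; ring
    have hPbdd : ∃ b0 : ℤ, ∀ z : ℤ, (Φ z).map (N ^ (m - 1)) ≠ ⊥ → b0 ≤ z := by
      obtain ⟨a, ha⟩ := hsep
      refine ⟨a + 1, fun z hz => ?_⟩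
      by_contra h
      exact hz (by rw [ha z (by omega)]; exact Submodule.map_bot _)
    have hPinh : ∃ z : ℤ, (Φ z).map (N ^ (m - 1)) ≠ ⊥ := by
      obtain ⟨b0, hb0⟩ := hexh
      refine ⟨b0, ?_⟩
      rw [hb0 b0 le_rfl, Submodule.map_top]
      rwa [ne_eq, LinearMap.range_eq_bot]
    obtain ⟨p, hp, hpmin⟩ := Int.exists_least_of_bdd hPbdd hPinh
    obtain ⟨y, hymem, hyne⟩ := Submodule.exists_mem_ne_zero_of_ne_bot hp
    obtain ⟨e, he, hey⟩ := hymem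
    have hem : (N ^ (m - 1)) e ≠ 0 := by rw [hey]; exact hyne

    -- ===== Step 2 : the key coefficient-vanishing lemma =====
    have hkill : ∀ s : ℕ, m ≤ s → (N ^ s) e = 0 := by
      intro s hs
      have h0 : N ^ s = N ^ (s - m) * N ^ m := by
        rw [← pow_add]; congr 1; omega
      rw [h0, Module.End.mul_apply, hm0, LinearMap.zero_apply, map_zero]
    have hcomp : ∀ (t : ℕ) (ht : t < m) (c : Fin m → K),
        (∀ k : Fin m, (k : ℕ) < t → c k = 0) →
        (N ^ (m - 1 - t)) (∑ k : Fin m, c k • (N ^ (k : ℕ)) e)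
          = c ⟨t, ht⟩ • (N ^ (m - 1)) e := by
      intro t ht c hc
      rw [map_sum]
      rw [Finset.sum_eq_single_of_mem ⟨t, ht⟩ (Finset.mem_univ _)]
      · rw [map_smul, ← Module.End.mul_apply, ← pow_add,
          show m - 1 - t + t = m - 1 from by omega]
      · intro k _ hk
        rcases lt_or_gt_of_ne (fun h : (k : ℕ) = t => hk (Fin.ext h)) with h | h
        · rw [hc k h, zero_smul, map_zero]
        · rw [map_smul, ← Module.End.mul_apply, ← pow_add,
            hkill _ (by omega), smul_zero]
    have key : ∀ (d t : ℕ), m ≤ t + d → ∀ (j : ℤ) (c : Fin m → K),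
        (∀ k : Fin m, (k : ℕ) < t → c k = 0) →
        (∑ k : Fin m, c k • (N ^ (k : ℕ)) e) ∈ Φ j →
        ∀ k : Fin m, ¬(p + (k : ℕ) ≤ j) → c k = 0 := by
      intro d
      induction d with
      | zero =>
        intro t ht j c hc _ k _
        exact hc k (by omega)
      | succ d IHd =>
        intro t ht j c hc hmem k hk
        by_cases htm : m ≤ t
        · exact hc k (by omega)
        push_neg at htm
        by_cases hct : c ⟨t, htm⟩ = 0
        · refine IHd (t + 1) (by omega) j c ?_ hmem k hk
          intro k' hk'
          rcases Nat.lt_or_ge (k' : ℕ) t with h | h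
          · exact hc k' h
          · have hkt' : (k' : ℕ) = t := by omega
            rw [show k' = ⟨t, htm⟩ from Fin.ext hkt']; exact hct
        · have h1 := hcomp t htm c hc
          have h2 : (N ^ (m - 1 - t)) (∑ k : Fin m, c k • (N ^ (k : ℕ)) e)
              ∈ Φ (j + (m - 1 - t : ℕ)) := mapNpow _ _ _ hmem
          rw [h1] at h2
          have h3 : c ⟨t, htm⟩ • (N ^ (m - 1)) e
              ∈ LinearMap.range (N ^ (m - 1)) ⊓ Φ ((j - t) + (m - 1 : ℕ)) := by
            constructor
            · exact ⟨c ⟨t, htm⟩ • e, by rw [map_smul]⟩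
            · have hcast : (j - (t : ℤ)) + ((m - 1 : ℕ) : ℤ) = j + ((m - 1 - t : ℕ) : ℤ) := by
                push_cast [Nat.cast_sub (by omega : 1 ≤ m), Nat.cast_sub (by omega : t ≤ m - 1)]
                omega
              rw [hcast]; exact h2
          rw [hstrict (m - 1) (j - t)] at h3
          have hne : (Φ (j - t)).map (N ^ (m - 1)) ≠ ⊥ := by
            intro hb
            rw [hb, Submodule.mem_bot] at h3
            rcases smul_eq_zero.mp h3 with h | h
            · exact hct h
            · exact hem h
          have hpt : p + (t : ℤ) ≤ j := by have := hpmin _ hne; omega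
          set c' := Function.update c ⟨t, htm⟩ 0 with hc'def
          have hterm : ∀ k : Fin m, c' k • (N ^ (k : ℕ)) e
              = c k • (N ^ (k : ℕ)) e
                - (if k = ⟨t, htm⟩ then c ⟨t, htm⟩ • (N ^ t) e else 0) := by
            intro k
            by_cases hkt : k = ⟨t, htm⟩
            · subst hkt; simp [hc'def]
            · simp [hc'def, Function.update_of_ne hkt, if_neg hkt]
          have hsum' : (∑ k : Fin m, c' k • (N ^ (k : ℕ)) e)
              = (∑ k : Fin m, c k • (N ^ (k : ℕ)) e) - c ⟨t, htm⟩ • (N ^ t) e := by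
            simp only [hterm, Finset.sum_sub_distrib]
            congr 1
            rw [Finset.sum_ite_eq' Finset.univ (⟨t, htm⟩ : Fin m)]
            simp
          have hmem' : (∑ k : Fin m, c' k • (N ^ (k : ℕ)) e) ∈ Φ j := by
            rw [hsum']
            refine sub_mem hmem (Submodule.smul_mem _ _ ?_)
            exact hmono hpt (mapNpow t p e he)
          have hc'' : ∀ k' : Fin m, (k' : ℕ) < t + 1 → c' k' = 0 := by
            intro k' hk'
            rcases Nat.lt_or_ge (k' : ℕ) t with h | h
            · rw [hc'def, Function.update_of_ne (Fin.ne_of_val_ne (by omega : (k' : ℕ) ≠ t))]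
              exact hc k' h
            · have hk'' : k' = ⟨t, htm⟩ := Fin.ext (show (k' : ℕ) = t by omega)
              rw [hk'', hc'def]; simp
          have hres := IHd (t + 1) (by omega) j c' hc'' hmem' k hk
          by_cases hkt : k = ⟨t, htm⟩
          · exfalso; apply hk; rw [hkt]; exact hpt
          · rw [← Function.update_of_ne hkt 0 c]; exact hres
    have key0 : ∀ (j : ℤ) (c : Fin m → K),
        (∑ k : Fin m, c k • (N ^ (k : ℕ)) e) ∈ Φ j →
        ∀ k : Fin m, ¬(p + (k : ℕ) ≤ j) → c k = 0 :=
      fun j c hc => key m 0 (by omega) j c (fun k hk => absurd hk (by omega)) hc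

    -- ===== Step 3 : the Jordan block, the subspace U and the functional φ =====
    set b : Fin m → H := fun k => (N ^ (k : ℕ)) e with hbdef
    have hbli : LinearIndependent K b := by
      rw [Fintype.linearIndependent_iff]
      intro c hc k
      refine key0 (p - 1) c ?_ k (by omega)
      rw [hc]; exact Submodule.zero_mem _
    set S : ℤ → Set H := fun j => {h : H | ∃ k : ℕ, k < m ∧ p + (k : ℤ) ≤ j ∧ h = (N ^ k) e}
      with hSdef
    have hSΦ : ∀ j : ℤ, span K (S j) ≤ Φ j := by
      intro j
      rw [span_le]
      rintro h ⟨k, hkm, hkj, rfl⟩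
      exact hmono hkj (mapNpow k p e he)
    have claim1 : ∀ (j : ℤ) (x : H), x ∈ span K (Set.range b) → x ∈ Φ j →
        x ∈ span K (S j) := by
      intro j x hxV hxΦ
      rw [mem_span_range_iff_exists_fun] at hxV
      obtain ⟨c, rfl⟩ := hxV
      refine Submodule.sum_mem _ fun k _ => ?_
      by_cases hpk : p + ((k : ℕ) : ℤ) ≤ j
      · exact Submodule.smul_mem _ _ (subset_span ⟨k, k.2, hpk, rfl⟩)
      · rw [key0 j c hxΦ k hpk, zero_smul]; exact Submodule.zero_mem _
    set U : Submodule K H :=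
      ⨆ (q : ℤ) (s : ℕ) (_ : q + (s : ℤ) ≤ p + (m : ℤ) - 2), (Φ q).map (N ^ s) with hUdef
    have hmemU : ∀ (q : ℤ) (s : ℕ) (x : H), q + (s : ℤ) ≤ p + (m : ℤ) - 2 →
        x ∈ Φ q → (N ^ s) x ∈ U := by
      intro q s x hqs hx
      have h1 : (Φ q).map (N ^ s) ≤ U := by
        rw [hUdef]
        exact le_iSup_of_le q (le_iSup_of_le s (le_iSup_of_le hqs le_rfl))
      exact h1 ⟨x, hx, rfl⟩
    have hUΦ : U ≤ Φ (p + (m : ℤ) - 2) := by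
      rw [hUdef]
      refine iSup_le fun q => iSup_le fun s => iSup_le fun hqs => ?_
      rintro h ⟨x, hx, rfl⟩
      exact hmono (by omega : q + (s : ℤ) ≤ p + (m : ℤ) - 2) (mapNpow s q x hx)
    have hnotU : (N ^ (m - 1)) e ∉ U := by
      intro hmem
      have h1 : (N ^ (m - 1)) e ∈ span K (S (p + (m : ℤ) - 2)) :=
        claim1 _ _ (subset_span ⟨⟨m - 1, by omega⟩, rfl⟩) (hUΦ hmem)
      have h2 : S (p + (m : ℤ) - 2) ⊆ b '' {k : Fin m | k ≠ ⟨m - 1, by omega⟩} := by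
        rintro h ⟨k, hkm, hkj, rfl⟩
        refine ⟨⟨k, hkm⟩, ?_, rfl⟩
        intro hh
        have : k = m - 1 := congrArg Fin.val hh
        omega
      have h3 : b ⟨m - 1, by omega⟩ ∈ span K (b '' {k : Fin m | k ≠ ⟨m - 1, by omega⟩}) :=
        span_mono h2 h1
      exact hbli.notMem_span_image (by simp) h3
    obtain ⟨φ, hφU, hφ1⟩ : ∃ φ : H →ₗ[K] K, (∀ x ∈ U, φ x = 0) ∧ φ ((N ^ (m - 1)) e) = 1 := by
      have hx : U.mkQ ((N ^ (m - 1)) e) ≠ 0 := by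
        simp only [Submodule.mkQ_apply, ne_eq, Submodule.Quotient.mk_eq_zero]
        exact hnotU
      obtain ⟨g, hg⟩ : ∃ g : Module.Dual K (H ⧸ U), g (U.mkQ ((N ^ (m - 1)) e)) ≠ 0 := by
        by_contra hcon
        push_neg at hcon
        exact hx ((Module.forall_dual_apply_eq_zero_iff K _).mp hcon)
      refine ⟨(g (U.mkQ ((N ^ (m - 1)) e)))⁻¹ • (g ∘ₗ U.mkQ), fun x hx => ?_, ?_⟩
      · simp [Submodule.Quotient.mk_eq_zero, (Submodule.Quotient.mk_eq_zero U).mpr hx,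
          Submodule.mkQ_apply, show U.mkQ x = 0 from (Submodule.Quotient.mk_eq_zero U).mpr hx]
      · simp only [LinearMap.smul_apply, LinearMap.coe_comp, Function.comp_apply]
        exact inv_mul_cancel₀ hg

    -- ===== Step 4 : the projection π and the complement W =====
    have hkillmap : ∀ s : ℕ, m ≤ s → (N ^ s : H →ₗ[K] H) = 0 := by
      intro s hs
      rw [show s = (s - m) + m by omega, pow_add, hm0, mul_zero]
    have hφe : ∀ k : ℕ, φ ((N ^ k) e) = if k = m - 1 then 1 else 0 := by
      intro k
      rcases Nat.lt_trichotomy k (m - 1) with h | h | h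
      · rw [if_neg (by omega), hφU _ (hmemU p k e (by omega) he)]
      · rw [if_pos h, h, hφ1]
      · rw [if_neg (by omega), hkill k (by omega), map_zero]
    set π : H → H := fun x => ∑ k : Fin m, φ ((N ^ (m - 1 - (k : ℕ))) x) • (N ^ (k : ℕ)) e
      with hπdef
    have hπS : ∀ (j : ℤ) (x : H), x ∈ Φ j → π x ∈ span K (S j) := by
      intro j x hx
      refine Submodule.sum_mem _ fun k _ => ?_
      by_cases hpk : p + ((k : ℕ) : ℤ) ≤ j
      · exact Submodule.smul_mem _ _ (subset_span ⟨k, k.2, hpk, rfl⟩)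
      · rw [hφU _ (hmemU j (m - 1 - (k : ℕ)) x (by omega) hx), zero_smul]
        exact Submodule.zero_mem _
    have hπV : ∀ x : H, π x ∈ span K (Set.range b) :=
      fun x => Submodule.sum_mem _ fun k _ => Submodule.smul_mem _ _ (subset_span ⟨k, rfl⟩)
    have hπφ : ∀ (x : H) (s : ℕ), φ ((N ^ s) (x - π x)) = 0 := by
      intro x s
      rcases Nat.lt_or_ge s m with hs | hs
      · rw [map_sub, map_sub]
        have hπx : (N ^ s) (π x) = ∑ k : Fin m,
            φ ((N ^ (m - 1 - (k : ℕ))) x) • (N ^ (s + (k : ℕ))) e := by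
          rw [hπdef, map_sum]
          refine Finset.sum_congr rfl fun k _ => ?_
          rw [map_smul, ← Module.End.mul_apply, ← pow_add]
        rw [hπx, map_sum]
        have hterm : ∀ k : Fin m, φ (φ ((N ^ (m - 1 - (k : ℕ))) x) • (N ^ (s + (k : ℕ))) e)
            = φ ((N ^ (m - 1 - (k : ℕ))) x) * (if s + (k : ℕ) = m - 1 then 1 else 0) := by
          intro k
          rw [map_smul, smul_eq_mul, hφe]
        rw [Finset.sum_congr rfl fun k _ => hterm k]
        rw [Finset.sum_eq_single_of_mem (⟨m - 1 - s, by omega⟩ : Fin m) (Finset.mem_univ _)]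
        · rw [if_pos (by simp; omega), mul_one,
            show m - 1 - (m - 1 - s) = s from by omega, sub_self]
        · intro k _ hk
          rw [if_neg ?_, mul_zero]
          intro hc
          exact hk (Fin.ext (show (k : ℕ) = m - 1 - s by have := k.2; omega))
      · rw [hkillmap s hs, LinearMap.zero_apply, map_zero]
    set W : Submodule K H := ⨅ s : Fin m, LinearMap.ker (φ ∘ₗ (N ^ (s : ℕ))) with hWdef
    have hWmem : ∀ x : H, x ∈ W ↔ ∀ s : ℕ, φ ((N ^ s) x) = 0 := by
      intro x
      rw [hWdef, Submodule.mem_iInf]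
      constructor
      · intro h s
        rcases Nat.lt_or_ge s m with hs | hs
        · simpa using h ⟨s, hs⟩
        · rw [hkillmap s hs, LinearMap.zero_apply, map_zero]
      · intro h s
        simpa using h (s : ℕ)
    have hNW : ∀ x ∈ W, N x ∈ W := by
      intro x hx
      rw [hWmem] at hx ⊢
      intro s
      rw [show (N ^ s) (N x) = (N ^ (s + 1)) x from by rw [pow_succ, Module.End.mul_apply]]
      exact hx (s + 1)
    have hsub : ∀ x : H, x - π x ∈ W := fun x => (hWmem _).mpr (hπφ x)
    have hVW : span K (Set.range b) ⊓ W = ⊥ := by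
      rw [eq_bot_iff]
      intro x hx
      rw [Submodule.mem_inf] at hx
      obtain ⟨hxV, hxW⟩ := hx
      rw [mem_span_range_iff_exists_fun] at hxV
      obtain ⟨c, rfl⟩ := hxV
      rw [Submodule.mem_bot]
      have hc : ∀ t : Fin m, c t = 0 := by
        intro t
        have h1 := (hWmem _).mp hxW (m - 1 - (t : ℕ))
        rw [map_sum, map_sum] at h1
        have h2 : ∀ k : Fin m, φ ((N ^ (m - 1 - (t : ℕ))) (c k • b k))
            = c k * (if (m - 1 - (t : ℕ)) + (k : ℕ) = m - 1 then 1 else 0) := by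
          intro k
          simp only [hbdef]
          rw [map_smul, map_smul, smul_eq_mul, ← Module.End.mul_apply, ← pow_add, hφe]
        rw [Finset.sum_congr rfl fun k _ => h2 k,
          Finset.sum_eq_single_of_mem t (Finset.mem_univ _)] at h1
        · rw [if_pos (by omega), mul_one] at h1
          exact h1
        · intro k _ hk
          rw [if_neg ?_, mul_zero]
          intro hcon
          exact hk (Fin.ext (show (k : ℕ) = (t : ℕ) by have := k.2; have := t.2; omega))
      rw [Finset.sum_congr rfl fun k _ => by rw [hc k, zero_smul]]
      exact Finset.sum_const_zero

    -- ===== Step 5 : splitting of the filtration and dimension drop =====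
    have hSb : ∀ j : ℤ, span K (S j) ≤ span K (Set.range b) := by
      intro j
      rw [span_le, hSdef]
      rintro h ⟨k, hkm, _, rfl⟩
      exact subset_span ⟨⟨k, hkm⟩, by rw [hbdef]⟩
    have hΦsplit : ∀ j : ℤ, Φ j = span K (S j) ⊔ (Φ j ⊓ W) := by
      intro j
      refine le_antisymm ?_ (sup_le (hSΦ j) inf_le_left)
      intro x hx
      have h1 : π x ∈ span K (S j) := hπS j x hx
      have h2 : x - π x ∈ Φ j ⊓ W :=
        ⟨sub_mem hx (hSΦ j h1), hsub x⟩
      have hxeq : x = π x + (x - π x) := by abel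
      rw [hxeq]
      exact Submodule.add_mem _ (le_sup_left (α := Submodule K H) h1)
        (le_sup_right (α := Submodule K H) h2)
    have hVWtop : span K (Set.range b) ⊔ W = ⊤ := by
      obtain ⟨b0, hb0⟩ := hexh
      rw [eq_top_iff, ← hb0 b0 le_rfl, hΦsplit b0]
      exact sup_le (le_sup_of_le_left (hSb b0)) (le_sup_of_le_right inf_le_right)
    have hWne : W ≠ ⊤ := by
      intro htop
      have hW1 : (N ^ (m - 1)) e ∈ W := htop ▸ Submodule.mem_top
      have h0 := (hWmem _).mp hW1 0
      rw [pow_zero, Module.End.one_apply, hφ1] at h0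
      exact one_ne_zero h0
    have hWrank : Module.finrank K ↥W ≤ n := by
      have := Submodule.finrank_lt (K := K) (V := H) hWne
      omega

    -- ===== Step 6 : restriction to W and the induction hypothesis =====
    have hNV : ∀ (s : ℕ) (x : H), x ∈ span K (Set.range b) →
        (N ^ s) x ∈ span K (Set.range b) := by
      have h1 : ∀ x ∈ span K (Set.range b), N x ∈ span K (Set.range b) := by
        intro x hx
        have hmap : (span K (Set.range b)).map N ≤ span K (Set.range b) := by
          rw [Submodule.map_span, span_le]
          rintro y ⟨z, ⟨k, rfl⟩, rfl⟩
          rcases Nat.lt_or_ge ((k : ℕ) + 1) m with hk | hk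
          · refine subset_span ⟨⟨(k : ℕ) + 1, hk⟩, ?_⟩
            rw [hbdef]
            simp only []
            rw [← Module.End.mul_apply, ← pow_succ']
          · have hz : N (b k) = 0 := by
              rw [hbdef]
              simp only []
              rw [← Module.End.mul_apply, ← pow_succ', hkill _ hk]
            rw [hz]
            exact Submodule.zero_mem _
        exact hmap ⟨x, hx, rfl⟩
      intro s
      induction s with
      | zero => intro x hx; simpa using hx
      | succ s ih =>
        intro x hx
        rw [pow_succ, Module.End.mul_apply]
        exact ih _ (h1 x hx)
    have hNWpow : ∀ (s : ℕ) (x : H), x ∈ W → (N ^ s) x ∈ W :=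
      fun s x hx => Module.End.pow_apply_mem_of_forall_mem s hNW x hx
    set NW : ↥W →ₗ[K] ↥W := N.restrict hNW with hNWdef
    have hcoe : ∀ (s : ℕ) (x : ↥W), (((NW ^ s) x : ↥W) : H) = (N ^ s) (x : H) := by
      intro s x
      rw [hNWdef, Module.End.pow_restrict, LinearMap.restrict_coe_apply]
    have hNWnil : IsNilpotent NW := by
      refine ⟨m, ?_⟩
      ext x
      have h := hcoe m x
      rw [hm0, LinearMap.zero_apply] at h
      simpa using h
    set Φ' : ℤ → Submodule K ↥W := fun i => (Φ i).comap W.subtype with hΦ'def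
    have hΦ'mono : Monotone Φ' := fun i j hij => Submodule.comap_mono (hmono hij)
    have hΦ'sep : ∃ a : ℤ, ∀ i ≤ a, Φ' i = ⊥ := by
      obtain ⟨a, ha⟩ := hsep
      exact ⟨a, fun i hi => by
        rw [hΦ'def]; simp only []
        rw [ha i hi, Submodule.comap_bot, Submodule.ker_subtype]⟩
    have hΦ'exh : ∃ b : ℤ, ∀ i : ℤ, b ≤ i → Φ' i = ⊤ := by
      obtain ⟨b0, hb0⟩ := hexh
      exact ⟨b0, fun i hi => by
        rw [hΦ'def]; simp only []
        rw [hb0 i hi]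
        exact Submodule.comap_top _⟩
    have hΦ'N : ∀ i : ℤ, (Φ' i).map NW ≤ Φ' (i + 1) := by
      rintro i x ⟨y, hy, rfl⟩
      rw [hΦ'def, Submodule.mem_comap] at *
      have hcoe1 : (↑(NW y) : H) = N ↑y := by
        have := hcoe 1 y
        simpa using this
      rw [Submodule.subtype_apply, hcoe1]
      exact hNΦ i ⟨↑y, hy, rfl⟩
    have hΦ'strict : ∀ j : ℕ, ∀ i : ℤ,
        LinearMap.range (NW ^ j) ⊓ Φ' (i + j) = (Φ' i).map (NW ^ j) := by
      intro j i
      ext w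
      rw [Submodule.mem_inf]
      constructor
      · rintro ⟨hr, hw⟩
        obtain ⟨x, rfl⟩ := hr
        rw [hΦ'def, Submodule.mem_comap, Submodule.subtype_apply] at hw
        have h0 : ((((NW ^ j) x) : ↥W) : H) ∈ LinearMap.range (N ^ j) ⊓ Φ (i + j) := by
          refine ⟨⟨(x : H), ?_⟩, hw⟩
          rw [← hcoe]
        rw [hstrict j i] at h0
        obtain ⟨y, hy, hyw⟩ := h0
        have h1 : π y ∈ span K (S i) := hπS i y hy
        have h2 : y - π y ∈ W := hsub y
        have h2' : y - π y ∈ Φ i := sub_mem hy (hSΦ i h1)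
        have h3 : (N ^ j) (π y) ∈ span K (Set.range b) := hNV j _ (hSb i h1)
        have h4 : (N ^ j) (y - π y) ∈ W := hNWpow j _ h2
        have h5 : (N ^ j) (π y) = (((NW ^ j) x : ↥W) : H) - (N ^ j) (y - π y) := by
          rw [← hyw, ← map_sub]
          congr 1
          abel
        have h6 : (N ^ j) (π y) ∈ span K (Set.range b) ⊓ W := by
          refine ⟨h3, ?_⟩
          rw [h5]
          exact sub_mem ((NW ^ j) x).2 h4
        rw [hVW, Submodule.mem_bot] at h6
        have h7 : (((NW ^ j) x : ↥W) : H) = (N ^ j) (y - π y) := by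
          rw [h6] at h5
          exact sub_eq_zero.mp h5.symm
        refine ⟨⟨y - π y, h2⟩, h2', ?_⟩
        refine Subtype.ext ?_
        rw [hcoe]
        exact h7.symm
      · rintro ⟨x, hx, rfl⟩
        have hx' : (x : H) ∈ Φ i := hx
        refine ⟨⟨x, rfl⟩, ?_⟩
        show (((NW ^ j) x : ↥W) : H) ∈ Φ (i + (j : ℤ))
        rw [hcoe]
        exact mapNpow j i _ hx'
    obtain ⟨ι', fι', e', p', m', hm'pos, hli', hspan', hzero', hΦ''0⟩ :=
      IH ↥W hWrank NW hNWnil Φ' hΦ'mono hΦ'sep hΦ'exh hΦ'N hΦ'strict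
    haveI := fι'
    have hΦ'' : ∀ j : ℤ, (Φ j).comap W.subtype = Submodule.span K
        {w : ↥W | ∃ (i : ι') (k : ℕ), k < m' i ∧ p' i + (k : ℤ) ≤ j ∧
          w = (NW ^ k) (e' i)} := fun j => hΦ''0 j

    -- ===== Step 7 : assembly =====
    set fW : (Σ i : ι', Fin (m' i)) → ↥W :=
      fun x => (NW ^ (x.2 : ℕ)) (e' x.1) with hfWdef
    set E : Option ι' → H := fun o => match o with
      | none => e
      | some i => ((e' i : ↥W) : H) with hEdef
    set P : Option ι' → ℤ := fun o => match o with
      | none => p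
      | some i => p' i with hPdef
    set M : Option ι' → ℕ := fun o => match o with
      | none => m
      | some i => m' i with hMdef
    set G : (Fin m ⊕ Σ i : ι', Fin (m' i)) → H :=
      Sum.elim b (fun x => ((fW x : ↥W) : H)) with hGdef
    set σ : (Σ o : Option ι', Fin (M o)) ≃ (Fin m ⊕ Σ i : ι', Fin (m' i)) :=
      { toFun := fun x => match x with
          | ⟨none, k⟩ => Sum.inl k
          | ⟨some i, k⟩ => Sum.inr ⟨i, k⟩
        invFun := fun s => match s with
          | Sum.inl k => ⟨none, k⟩
          | Sum.inr ⟨i, k⟩ => ⟨some i, k⟩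
        left_inv := by rintro ⟨(_ | i), k⟩ <;> rfl
        right_inv := by rintro (k | ⟨i, k⟩) <;> rfl } with hσdef
    have hFG : (fun x : Σ o : Option ι', Fin (M o) => (N ^ (x.2 : ℕ)) (E x.1))
        = G ∘ σ := by
      funext x
      rcases x with ⟨(_ | i), k⟩
      · rfl
      · show (N ^ (k : ℕ)) ((e' i : ↥W) : H) = ((fW ⟨i, k⟩ : ↥W) : H)
        rw [hfWdef]
        exact (hcoe _ _).symm
    have hWli : LinearIndependent K (fun x : Σ i : ι', Fin (m' i) => ((fW x : ↥W) : H)) :=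
      hli'.map' W.subtype (Submodule.ker_subtype W)
    have hWrange : span K (Set.range (fun x : Σ i : ι', Fin (m' i) => ((fW x : ↥W) : H))) ≤ W := by
      rw [span_le]
      rintro h ⟨x, rfl⟩
      exact (fW x).2
    have hGli : LinearIndependent K G := by
      rw [hGdef, linearIndependent_sum]
      refine ⟨hbli, hWli, ?_⟩
      exact disjoint_iff.mpr (eq_bot_iff.mpr (le_trans (inf_le_inf_left _ hWrange) hVW.le))
    have hFli : LinearIndependent K
        (fun x : Σ o : Option ι', Fin (M o) => (N ^ (x.2 : ℕ)) (E x.1)) := by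
      rw [hFG]
      exact hGli.comp σ σ.injective
    have hWspan : span K (Set.range (fun x : Σ i : ι', Fin (m' i) => ((fW x : ↥W) : H))) = W := by
      have h1 : (fun x : Σ i : ι', Fin (m' i) => ((fW x : ↥W) : H))
          = W.subtype ∘ fW := rfl
      rw [h1, Set.range_comp, Submodule.span_image, hspan', Submodule.map_top,
        Submodule.range_subtype]
    have hFspan : Submodule.span K
        (Set.range (fun x : Σ o : Option ι', Fin (M o) => (N ^ (x.2 : ℕ)) (E x.1))) = ⊤ := by
      rw [hFG, Set.range_comp, Set.range_eq_univ.mpr σ.surjective, Set.image_univ]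
      rw [hGdef, Sum.elim_range, Submodule.span_union, hWspan]
      exact hVWtop
    have hFzero : ∀ o : Option ι', (N ^ (M o)) (E o) = 0 := by
      rintro (_ | i)
      · show (N ^ m) e = 0
        rw [hm0]; rfl
      · show (N ^ (m' i)) ((e' i : ↥W) : H) = 0
        rw [← hcoe, hzero' i]
        rfl
    have hFfilt : ∀ j : ℤ, Φ j = Submodule.span K
        {h : H | ∃ (o : Option ι') (k : ℕ), k < M o ∧ P o + (k : ℤ) ≤ j ∧
          h = (N ^ k) (E o)} := by
      intro j
      have hset : {h : H | ∃ (o : Option ι') (k : ℕ), k < M o ∧ P o + (k : ℤ) ≤ j ∧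
            h = (N ^ k) (E o)}
          = S j
            ∪ (W.subtype '' {w : ↥W | ∃ (i : ι') (k : ℕ), k < m' i ∧ p' i + (k : ℤ) ≤ j ∧
                w = (NW ^ k) (e' i)}) := by
        ext h
        constructor
        · rintro ⟨(_ | i), k, hk, hpk, rfl⟩
          · exact Or.inl ⟨k, hk, hpk, rfl⟩
          · refine Or.inr ⟨(NW ^ k) (e' i), ⟨i, k, hk, hpk, rfl⟩, ?_⟩
            show (((NW ^ k) (e' i) : ↥W) : H) = (N ^ k) ((e' i : ↥W) : H)
            exact hcoe _ _
        · rintro (⟨k, hk, hpk, rfl⟩ | ⟨w, ⟨i, k, hk, hpk, rfl⟩, rfl⟩)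
          · exact ⟨none, k, hk, hpk, rfl⟩
          · refine ⟨some i, k, hk, hpk, ?_⟩
            show W.subtype ((NW ^ k) (e' i)) = (N ^ k) (E (some i))
            rw [Submodule.subtype_apply, hcoe]
      rw [hset, Submodule.span_union, Submodule.span_image, ← hΦ'' j,
        Submodule.map_comap_subtype]
      rw [inf_comm W (Φ j)]
      exact hΦsplit j
    exact ⟨Option ι', inferInstance, E, P, M,
      fun o => by rcases o with (_ | i); exact hmpos; exact hm'pos i,
      hFli, hFspan, hFzero, hFfilt⟩

end JordanAux

/-- **Jordan-type decomposition of a strictly filtered nilpotent endomorphism**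
(M. Saito, Proposition 3.7).  Under the strictness hypothesis, `(H, Φ, N)` is a
direct sum of copies of `(K[N]/(N^m), F_{•-p}, N)`: there are vectors `e i`,
integers `p i` and positive lengths `m i` such that the `N^k (e i)`
(for `0 ≤ k < m i`) form a basis of `H`, `N^(m i) (e i) = 0`, and `Φ j` is
spanned by those `N^k (e i)` with `p i + k ≤ j`. -/
theorem exists_jordan_basis_of_strict_nilpotent
    {K H : Type*} [Field K] [AddCommGroup H] [Module K H]
    [FiniteDimensional K H]
    (N : H →ₗ[K] H) (hN : IsNilpotent N)
    (Φ : ℤ → Submodule K H) (hmono : Monotone Φ)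
    (hsep : ∃ a : ℤ, ∀ i ≤ a, Φ i = ⊥)
    (hexh : ∃ b : ℤ, ∀ i : ℤ, b ≤ i → Φ i = ⊤)
    (hNΦ : ∀ i : ℤ, (Φ i).map N ≤ Φ (i + 1))
    (hstrict : ∀ j : ℕ, ∀ i : ℤ,
      LinearMap.range (N ^ j) ⊓ Φ (i + j) = (Φ i).map (N ^ j)) :
    ∃ (ι : Type) (_ : Fintype ι) (e : ι → H) (p : ι → ℤ) (m : ι → ℕ),
      (∀ i : ι, 0 < m i) ∧
      LinearIndependent K
        (fun x : Σ i : ι, Fin (m i) => (N ^ (x.2 : ℕ)) (e x.1)) ∧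
      Submodule.span K
        (Set.range (fun x : Σ i : ι, Fin (m i) => (N ^ (x.2 : ℕ)) (e x.1))) = ⊤ ∧
      (∀ i : ι, (N ^ (m i)) (e i) = 0) ∧
      (∀ j : ℤ, Φ j = Submodule.span K
        {h : H | ∃ (i : ι) (k : ℕ), k < m i ∧ p i + (k : ℤ) ≤ j ∧
          h = (N ^ k) (e i)}) :=
  jordan_aux (Module.finrank K H) H le_rfl N hN Φ hmono hsep hexh hNΦ hstrict
end

section
/- Let K be a field, H a finite-dimensional K-vector space, N : H → H a nilpotent linear endomorphism, and (Φ_i)_{i∈ℤ} an increasing ℤ-indexed filtration of H by subspaces which is separated (Φ_i = 0 for i sufficiently small) and exhaustive (Φ_i = H for i sufficiently large), such that N(Φ_i) ⊆ Φ_{i+1} for all i. Suppose that for every integer j ≥ 0, range(N^j) ∩ Φ_{i+j} = N^j(Φ_i) for all i ∈ ℤ. Let Gr^Φ H = ⊕_{i∈ℤ} Φ_i/Φ_{i−1}, and let Gr(N) : Gr^Φ H → Gr^Φ H be the graded endomorphism induced by N via the maps Φ_i/Φ_{i−1} → Φ_{i+1}/Φ_i. Then there exists a K-linear isomorphism ψ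 : H → Gr^Φ H such that ψ(Φ_k) = ⊕_{i ≤ k} Φ_i/Φ_{i−1} for every k ∈ ℤ and ψ ∘ N = Gr(N) ∘ ψ. -/
/-- The `i`-th graded piece `Φ i / Φ (i-1)` of an increasing `ℤ`-indexed
filtration `Φ` by subspaces. -/
def GrPiece {K H : Type*} [Field K] [AddCommGroup H] [Module K H]
    (Φ : ℤ → Submodule K H) (i : ℤ) : Type _ :=
  Φ i ⧸ (Φ (i - 1)).comap (Φ i).subtype

noncomputable instance {K H : Type*} [Field K] [AddCommGroup H] [Module K H]
    (Φ : ℤ → Submodule K H) (i : ℤ) : AddCommGroup (GrPiece Φ i) :=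
  inferInstanceAs (AddCommGroup (Φ i ⧸ (Φ (i - 1)).comap (Φ i).subtype))

noncomputable instance {K H : Type*} [Field K] [AddCommGroup H] [Module K H]
    (Φ : ℤ → Submodule K H) (i : ℤ) : Module K (GrPiece Φ i) :=
  inferInstanceAs (Module K (Φ i ⧸ (Φ (i - 1)).comap (Φ i).subtype))

/-- The associated graded vector space `Gr^Φ H = ⊕_{i ∈ ℤ} Φ i / Φ (i-1)`. -/
abbrev GrMod {K H : Type*} [Field K] [AddCommGroup H] [Module K H]
    (Φ : ℤ → Submodule K H) : Type _ :=
  DirectSum ℤ (GrPiece Φ)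

/-- The map `Φ i / Φ (i-1) → Φ (i+1) / Φ i` induced by an endomorphism `N`
with `N (Φ i) ⊆ Φ (i+1)`. -/
noncomputable def grPieceMap {K H : Type*} [Field K] [AddCommGroup H] [Module K H]
    (N : H →ₗ[K] H) (Φ : ℤ → Submodule K H)
    (hNΦ : ∀ i : ℤ, (Φ i).map N ≤ Φ (i + 1)) (i : ℤ) :
    GrPiece Φ i →ₗ[K] GrPiece Φ (i + 1) :=
  Submodule.mapQ _ _
    (N.restrict (p := Φ i) (q := Φ (i + 1))
      (fun x hx => hNΦ i ⟨x, hx, rfl⟩))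
    (by
      intro x hx
      simp only [Submodule.mem_comap, LinearMap.restrict_apply] at hx ⊢
      have h1 : i + 1 - 1 = i - 1 + 1 := by ring
      rw [h1]
      exact hNΦ (i - 1) ⟨(x : H), hx, rfl⟩)

/-- The graded endomorphism `Gr(N) : Gr^Φ H → Gr^Φ H` induced by `N`, sending
the `i`-th piece to the `(i+1)`-st piece. -/
noncomputable def grN {K H : Type*} [Field K] [AddCommGroup H] [Module K H]
    (N : H →ₗ[K] H) (Φ : ℤ → Submodule K H)
    (hNΦ : ∀ i : ℤ, (Φ i).map N ≤ Φ (i + 1)) :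
    GrMod Φ →ₗ[K] GrMod Φ :=
  DirectSum.toModule K ℤ (GrMod Φ) fun i =>
    (DirectSum.lof K ℤ (GrPiece Φ) (i + 1)).comp (grPieceMap N Φ hNΦ i)

section Aux

variable {K H : Type*} [Field K] [AddCommGroup H] [Module K H]

private lemma pow_mem_filt (N : H →ₗ[K] H) (Φ : ℤ → Submodule K H)
    (hNΦ : ∀ i : ℤ, (Φ i).map N ≤ Φ (i + 1)) :
    ∀ (j : ℕ) (k : ℤ) (x : H), x ∈ Φ k → (N ^ j) x ∈ Φ (k + j) := by
  intro j
  induction j with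
  | zero => intro k x hx; simpa using hx
  | succ n ihn =>
      intro k x hx
      have h1 : (N ^ (n + 1)) x = N ((N ^ n) x) := by
        rw [pow_succ']; rfl
      have h2 := hNΦ (k + n) ⟨_, ihn k x hx, rfl⟩
      rw [h1]
      convert h2 using 2
      push_cast
      ring

set_option maxHeartbeats 1000000 in
private lemma lemB [FiniteDimensional K H]
    (N : H →ₗ[K] H) (hN : IsNilpotent N)
    (Φ : ℤ → Submodule K H) (hmono : Monotone Φ)
    (a b : ℤ) (ha : ∀ i ≤ a, Φ i = ⊥) (hb : ∀ i : ℤ, b ≤ i → Φ i = ⊤)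
    (hNΦ : ∀ i : ℤ, (Φ i).map N ≤ Φ (i + 1)) :
    ∀ (n : ℕ) (P : Submodule K H), Module.finrank K P ≤ n →
      P.map N ≤ P →
      (∀ (j : ℕ) (i : ℤ), P.map (N ^ j) ⊓ Φ (i + j) ≤ (Φ i ⊓ P).map (N ^ j)) →
      ∃ V : ℤ → Submodule K H,
        (∀ i, V i ≤ Φ i ⊓ P) ∧
        (∀ i, (V i).map N ≤ V (i + 1)) ∧
        (∀ k, Φ k ⊓ P ≤ Φ (k - 1) ⊔ V k) ∧
        (∀ k, V k ⊓ Φ (k - 1) = ⊥) := by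
  intro n
  induction n with
  | zero =>
      intro P hrank _ _
      have hP : P = ⊥ := Submodule.finrank_eq_zero.mp (Nat.le_zero.mp hrank)
      exact ⟨fun _ => ⊥, fun i => bot_le, fun i => by simp,
        fun k => by simp [hP], fun k => by simp⟩
  | succ n ih =>
      intro P hrank hstab hstrictP
      classical
      by_cases hP : P = ⊥
      · exact ⟨fun _ => ⊥, fun i => bot_le, fun i => by simp,
          fun k => by simp [hP], fun k => by simp⟩
      obtain ⟨nn, hnn⟩ := hN
      have hpowP : ∀ (j : ℕ) (x : H), x ∈ P → (N ^ j) x ∈ P := by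
        intro j
        induction j with
        | zero => intro x hx; simpa using hx
        | succ l ihl =>
            intro x hx
            have h1 : (N ^ (l + 1)) x = N ((N ^ l) x) := by rw [pow_succ']; rfl
            rw [h1]
            exact hstab ⟨_, ihl x hx, rfl⟩
      have hex : ∃ j : ℕ, P.map (N ^ j) = ⊥ := by
        refine ⟨nn, ?_⟩
        rw [hnn]
        exact Submodule.map_zero P
      have hc0 : Nat.find hex ≠ 0 := by
        intro h0
        have h := Nat.find_spec hex
        rw [h0] at h
        simp only [pow_zero, Module.End.one_eq_id, Submodule.map_id] at h
        exact hP h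
      obtain ⟨m, hm1⟩ : ∃ m : ℕ, Nat.find hex = m + 1 :=
        ⟨Nat.find hex - 1, by omega⟩
      have hmne : P.map (N ^ m) ≠ ⊥ := Nat.find_min hex (by omega)
      have hm0 : P.map (N ^ (m + 1)) = ⊥ := hm1 ▸ Nat.find_spec hex
      have hNm1P : ∀ x ∈ P, (N ^ (m + 1)) x = 0 := by
        intro x hx
        have h : (N ^ (m + 1)) x ∈ P.map (N ^ (m + 1)) := ⟨x, hx, rfl⟩
        rw [hm0] at h
        simpa using h
      -- least i₀
      have hSne : ∃ i : ℤ, (Φ i ⊓ P).map (N ^ m) ≠ ⊥ := by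
        refine ⟨b, ?_⟩
        rw [hb b le_rfl, top_inf_eq]
        exact hmne
      have hSbdd : ∃ l : ℤ, ∀ z : ℤ, (Φ z ⊓ P).map (N ^ m) ≠ ⊥ → l ≤ z := by
        refine ⟨a + 1, fun z hz => ?_⟩
        by_contra hlt
        push_neg at hlt
        apply hz
        rw [ha z (by omega), bot_inf_eq, Submodule.map_bot]
      obtain ⟨i₀, hi₀, hi₀min⟩ := Int.exists_least_of_bdd hSbdd hSne
      have hbelow : ∀ i : ℤ, i < i₀ → (Φ i ⊓ P).map (N ^ m) = ⊥ := by
        intro i hi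
        by_contra h
        exact absurd (hi₀min i h) (by omega)
      obtain ⟨y, hy, hyne⟩ := Submodule.exists_mem_ne_zero_of_ne_bot hi₀
      obtain ⟨e, he, rfl⟩ := hy
      have he1 : e ∈ Φ i₀ := he.1
      have he2 : e ∈ P := he.2
      have hNme : (N ^ m) e ≠ 0 := hyne
      have hNje0 : ∀ j : ℕ, m < j → (N ^ j) e = 0 := by
        intro j hj
        have h1 : (N ^ (j - (m + 1))) * (N ^ (m + 1)) = N ^ j := by
          rw [← pow_add, Nat.sub_add_cancel (by omega)]
        rw [← h1, Module.End.mul_apply, hNm1P e he2, map_zero]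
      have hNmnot : (N ^ m) e ∉ Φ (i₀ + m - 1) := by
        intro hmem
        have heq1 : i₀ - 1 + (m : ℤ) = i₀ + m - 1 := by ring
        have h1 : (N ^ m) e ∈ P.map (N ^ m) ⊓ Φ ((i₀ - 1) + m) :=
          ⟨⟨e, he2, rfl⟩, by rw [heq1]; exact hmem⟩
        have h2 := hstrictP m (i₀ - 1) h1
        rw [hbelow (i₀ - 1) (by omega)] at h2
        exact hNme (by simpa using h2)
      -- the functional χ
      set Φ' : Submodule K H := Φ (i₀ + m - 1) with hΦ'def
      have hq : Φ'.mkQ ((N ^ m) e) ≠ 0 := by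
        rw [Submodule.mkQ_apply, Ne, Submodule.Quotient.mk_eq_zero]
        exact hNmnot
      obtain ⟨φ, hφ⟩ : ∃ φ : (H ⧸ Φ') →ₗ[K] K, φ (Φ'.mkQ ((N ^ m) e)) ≠ 0 := by
        by_contra hcon
        push_neg at hcon
        exact hq ((Module.forall_dual_apply_eq_zero_iff K _).mp hcon)
      set χ : H →ₗ[K] K := (φ (Φ'.mkQ ((N ^ m) e)))⁻¹ • (φ ∘ₗ Φ'.mkQ) with hχdef
      have hχ1 : χ ((N ^ m) e) = 1 := by
        rw [hχdef]
        simp only [LinearMap.smul_apply, LinearMap.comp_apply, smul_eq_mul]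
        exact inv_mul_cancel₀ hφ
      have hχ0 : ∀ x ∈ Φ', χ x = 0 := by
        intro x hx
        have h1 : Φ'.mkQ x = 0 := by
          rw [Submodule.mkQ_apply, Submodule.Quotient.mk_eq_zero]
          exact hx
        rw [hχdef]
        simp only [LinearMap.smul_apply, LinearMap.comp_apply, smul_eq_mul, h1, map_zero,
          mul_zero]
      -- the projector π
      set π : H →ₗ[K] H :=
        ∑ l ∈ Finset.range (m + 1), (χ ∘ₗ (N ^ (m - l))).smulRight ((N ^ l) e) with hπdef
      have hπ_apply : ∀ x : H,
          π x = ∑ l ∈ Finset.range (m + 1), χ ((N ^ (m - l)) x) • (N ^ l) e := by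
        intro x
        rw [hπdef]
        simp [LinearMap.sum_apply]
      have hkey : ∀ l l' : ℕ, (N ^ (m - l')) ((N ^ l) e) = (N ^ (m - l' + l)) e := by
        intro l l'
        rw [← Module.End.mul_apply, ← pow_add]
      have hπe : ∀ l : ℕ, l ≤ m → π ((N ^ l) e) = (N ^ l) e := by
        intro l hl
        rw [hπ_apply]
        rw [Finset.sum_eq_single l]
        · rw [hkey l l]
          have h1 : m - l + l = m := by omega
          rw [h1, hχ1, one_smul]
        · intro l' hl' hne
          have hl'm : l' ≤ m := by
            have := Finset.mem_range.mp hl'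
            omega
          rw [hkey l l']
          rcases lt_or_gt_of_ne hne with hlt | hgt
          · rw [hNje0 (m - l' + l) (by omega), map_zero, zero_smul]
          · have hmem : (N ^ (m - l' + l)) e ∈ Φ' := by
              have h1 := pow_mem_filt N Φ hNΦ (m - l' + l) i₀ e he1
              exact hmono (by omega) h1
            rw [hχ0 _ hmem, zero_smul]
        · intro h
          exact absurd (Finset.mem_range.mpr (by omega)) h
      have hπP : ∀ x : H, π x ∈ P := by
        intro x
        rw [hπ_apply]
        exact Submodule.sum_mem _ fun l _ => Submodule.smul_mem _ _ (hpowP l e he2)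
      have hπN : ∀ x ∈ P, π (N x) = N (π x) := by
        intro x hx
        have hL : ∀ l : ℕ, (N ^ (m - l)) (N x) = (N ^ (m - l + 1)) x := by
          intro l
          rw [← Module.End.mul_apply, ← pow_succ]
        calc π (N x)
            = ∑ l ∈ Finset.range (m + 1), χ ((N ^ (m - l + 1)) x) • (N ^ l) e := by
              rw [hπ_apply]
              exact Finset.sum_congr rfl fun l _ => by rw [hL l]
          _ = ∑ l ∈ Finset.range (m + 1), χ ((N ^ (m - l)) x) • (N ^ (l + 1)) e := by
              rw [Finset.sum_range_succ' _ m, Finset.sum_range_succ]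
              have ht1 : χ ((N ^ (m - 0 + 1)) x) • (N ^ 0) e = 0 := by
                have : m - 0 + 1 = m + 1 := by omega
                rw [this, hNm1P x hx, map_zero, zero_smul]
              have ht2 : χ ((N ^ (m - m)) x) • (N ^ (m + 1)) e = 0 := by
                rw [hNje0 (m + 1) (by omega), smul_zero]
              rw [ht1, ht2, add_zero, add_zero]
              refine Finset.sum_congr rfl fun l hl => ?_
              have hlm : l < m := Finset.mem_range.mp hl
              have h1 : m - (l + 1) + 1 = m - l := by omega
              rw [h1]
          _ = N (π x) := by
              rw [hπ_apply, map_sum]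
              refine Finset.sum_congr rfl fun l _ => ?_
              rw [map_smul, ← Module.End.mul_apply, ← pow_succ']
      have hπpow : ∀ (j : ℕ) (x : H), x ∈ P → π ((N ^ j) x) = (N ^ j) (π x) := by
        intro j
        induction j with
        | zero => intro x _; simp
        | succ l ihl =>
            intro x hx
            have h1 : (N ^ (l + 1)) x = (N ^ l) (N x) := by
              rw [← Module.End.mul_apply, ← pow_succ]
            rw [h1, ihl (N x) (hstab ⟨x, hx, rfl⟩), hπN x hx, ← Module.End.mul_apply,
              ← pow_succ]
      have hπidem : ∀ x : H, π (π x) = π x := by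
        intro x
        conv_lhs => rw [hπ_apply x]
        rw [map_sum]
        conv_rhs => rw [hπ_apply x]
        refine Finset.sum_congr rfl fun l hl => ?_
        rw [map_smul, hπe l (by have := Finset.mem_range.mp hl; omega)]
      -- the chain pieces W
      set W : ℤ → Submodule K H := fun k =>
        if i₀ ≤ k ∧ k ≤ i₀ + (m : ℤ) then Submodule.span K {(N ^ (k - i₀).toNat) e}
        else ⊥ with hWdef
      have hWle : ∀ k, W k ≤ Φ k ⊓ P := by
        intro k
        simp only [hWdef]
        by_cases hcond : i₀ ≤ k ∧ k ≤ i₀ + (m : ℤ)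
        · rw [if_pos hcond]
          rw [Submodule.span_singleton_le_iff_mem]
          refine ⟨?_, hpowP _ e he2⟩
          have h1 := pow_mem_filt N Φ hNΦ (k - i₀).toNat i₀ e he1
          have h2 : i₀ + ((k - i₀).toNat : ℤ) = k := by omega
          rwa [h2] at h1
        · rw [if_neg hcond]; exact bot_le
      have hπΦW : ∀ (k : ℤ) (x : H), x ∈ Φ k → π x ∈ Φ (k - 1) ⊔ W k := by
        intro k x hx
        rw [hπ_apply]
        refine Submodule.sum_mem _ fun l hl => ?_
        have hlm : l ≤ m := by have := Finset.mem_range.mp hl; omega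
        rcases lt_trichotomy (i₀ + (l : ℤ)) k with hlt | heq | hgt
        · refine Submodule.mem_sup_left (Submodule.smul_mem _ _ ?_)
          exact hmono (by omega) (pow_mem_filt N Φ hNΦ l i₀ e he1)
        · refine Submodule.mem_sup_right ?_
          simp only [hWdef]
          have hcond : i₀ ≤ k ∧ k ≤ i₀ + (m : ℤ) := by omega
          rw [if_pos hcond]
          have h1 : (k - i₀).toNat = l := by omega
          rw [h1]
          exact Submodule.smul_mem _ _ (Submodule.mem_span_singleton_self _)
        · have hmem : (N ^ (m - l)) x ∈ Φ' := by
            have h1 := pow_mem_filt N Φ hNΦ (m - l) k x hx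
            exact hmono (by omega) h1
          rw [hχ0 _ hmem, zero_smul]
          exact Submodule.zero_mem _
      have hπW : ∀ (k : ℤ) (w : H), w ∈ W k → π w = w := by
        intro k w hw
        simp only [hWdef] at hw
        by_cases hcond : i₀ ≤ k ∧ k ≤ i₀ + (m : ℤ)
        · rw [if_pos hcond] at hw
          obtain ⟨c, rfl⟩ := Submodule.mem_span_singleton.mp hw
          rw [map_smul, hπe _ (by omega)]
        · rw [if_neg hcond] at hw
          simp only [Submodule.mem_bot] at hw
          rw [hw, map_zero]
      have hWdisj : ∀ k, W k ⊓ Φ (k - 1) = ⊥ := by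
        intro k
        rw [eq_bot_iff]
        rintro x ⟨hx1, hx2⟩
        simp only [hWdef] at hx1
        by_cases hcond : i₀ ≤ k ∧ k ≤ i₀ + (m : ℤ)
        · rw [if_pos hcond] at hx1
          obtain ⟨c, rfl⟩ := Submodule.mem_span_singleton.mp hx1
          rcases eq_or_ne c 0 with rfl | hc
          · simp
          · exfalso
            have hje : (N ^ (k - i₀).toNat) e ∈ Φ (k - 1) := by
              have h1 := Submodule.smul_mem (Φ (k - 1)) c⁻¹ hx2
              rwa [smul_smul, inv_mul_cancel₀ hc, one_smul] at h1
            have h1 : (N ^ (m - (k - i₀).toNat)) ((N ^ (k - i₀).toNat) e) = (N ^ m) e := by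
              rw [← Module.End.mul_apply, ← pow_add, Nat.sub_add_cancel (by omega)]
            have h2 : (N ^ (m - (k - i₀).toNat)) ((N ^ (k - i₀).toNat) e) ∈ Φ' := by
              have h3 := pow_mem_filt N Φ hNΦ (m - (k - i₀).toNat) (k - 1) _ hje
              exact hmono (by omega) h3
            rw [h1] at h2
            exact one_ne_zero (hχ1 ▸ (hχ0 _ h2 ▸ rfl) : (1 : K) = 0)
        · rw [if_neg hcond] at hx1
          exact hx1
      -- the complement P'
      set P' : Submodule K H := P ⊓ LinearMap.ker π with hP'def
      have he0 : e ≠ 0 := by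
        intro h
        apply hNme
        rw [h, map_zero]
      have heπ : π e = e := by
        have h := hπe 0 (by omega)
        simpa using h
      have heP' : e ∉ P' := by
        intro h
        have h2 : π e = 0 := by simpa using (Submodule.mem_inf.mp h).2
        rw [heπ] at h2
        exact he0 h2
      have hlt : P' < P := lt_of_le_of_ne inf_le_left (by
        intro h
        rw [h] at heP'
        exact heP' he2)
      have hrank' : Module.finrank K P' ≤ n := by
        have := Submodule.finrank_lt_finrank_of_lt hlt
        omega
      have hstab' : P'.map N ≤ P' := by
        rintro _ ⟨x, hx, rfl⟩
        obtain ⟨hx1, hx2⟩ := Submodule.mem_inf.mp hx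
        have hx2' : π x = 0 := by simpa using hx2
        refine Submodule.mem_inf.mpr ⟨hstab ⟨x, hx1, rfl⟩, ?_⟩
        simp only [LinearMap.mem_ker]
        rw [hπN x hx1, hx2', map_zero]
      have hstrictP' : ∀ (j : ℕ) (i : ℤ),
          P'.map (N ^ j) ⊓ Φ (i + j) ≤ (Φ i ⊓ P').map (N ^ j) := by
        intro j i
        rintro x ⟨hx1, hx2⟩
        obtain ⟨u, hu, rfl⟩ := hx1
        have hxP : (N ^ j) u ∈ P.map (N ^ j) ⊓ Φ (i + j) := ⟨⟨u, hu.1, rfl⟩, hx2⟩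
        obtain ⟨w, hw, hweq⟩ := hstrictP j i hxP
        have hπwΦ : π w ∈ Φ i := by
          have h1 := hπΦW i w hw.1
          exact (sup_le (hmono (by omega)) ((hWle i).trans inf_le_left)) h1
        have hπu : π u = 0 := by simpa using hu.2
        refine ⟨w - π w, ⟨sub_mem hw.1 hπwΦ, sub_mem hw.2 (hπP w), ?_⟩, ?_⟩
        · exact LinearMap.mem_ker.mpr (by rw [map_sub, hπidem, sub_self])
        · rw [map_sub, hweq, ← hπpow j w hw.2, hweq, hπpow j u hu.1, hπu, map_zero, sub_zero]
      obtain ⟨V', hV'1, hV'2, hV'3, hV'4⟩ := ih P' hrank' hstab' hstrictP'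
      refine ⟨fun k => V' k ⊔ W k, ?_, ?_, ?_, ?_⟩
      · intro i
        exact sup_le ((hV'1 i).trans (inf_le_inf_left _ inf_le_left)) (hWle i)
      · intro i
        rw [Submodule.map_sup]
        refine sup_le ((hV'2 i).trans le_sup_left) ?_
        simp only [hWdef]
        by_cases hcond : i₀ ≤ i ∧ i ≤ i₀ + (m : ℤ)
        · rw [if_pos hcond, Submodule.map_span, Set.image_singleton]
          have himg : N ((N ^ (i - i₀).toNat) e) = (N ^ ((i - i₀).toNat + 1)) e := by
            rw [← Module.End.mul_apply, ← pow_succ']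
          rw [himg]
          by_cases hcond2 : i + 1 ≤ i₀ + (m : ℤ)
          · have h1 : (i - i₀).toNat + 1 = ((i + 1) - i₀).toNat := by omega
            rw [h1, if_pos (⟨by omega, hcond2⟩ : i₀ ≤ i + 1 ∧ i + 1 ≤ i₀ + (m : ℤ))]
            exact le_sup_right
          · have h1 : (i - i₀).toNat + 1 = m + 1 := by omega
            rw [h1, hNje0 (m + 1) (by omega)]
            rw [Submodule.span_singleton_eq_bot.mpr rfl]
            exact bot_le
        · rw [if_neg hcond, Submodule.map_bot]
          exact bot_le
      · intro k
        rintro x ⟨hxΦ, hxP⟩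
        have h1 : π x ∈ Φ (k - 1) ⊔ W k := hπΦW k x hxΦ
        have hπxΦ : π x ∈ Φ k :=
          (sup_le (hmono (by omega)) ((hWle k).trans inf_le_left)) h1
        have h2 : x - π x ∈ Φ k ⊓ P' := by
          exact ⟨sub_mem hxΦ hπxΦ, sub_mem hxP (hπP x),
            LinearMap.mem_ker.mpr (by rw [map_sub, hπidem, sub_self])⟩
        have h3 := hV'3 k h2
        have h4 : x = (x - π x) + π x := by abel
        have h5 : Φ (k - 1) ⊔ V' k ≤ Φ (k - 1) ⊔ (V' k ⊔ W k) :=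
          sup_le_sup_left le_sup_left _
        have h6 : Φ (k - 1) ⊔ W k ≤ Φ (k - 1) ⊔ (V' k ⊔ W k) :=
          sup_le_sup_left le_sup_right _
        rw [h4]
        exact Submodule.add_mem _ (h5 h3) (h6 h1)
      · intro k
        rw [eq_bot_iff]
        rintro x ⟨hx1, hx2⟩
        obtain ⟨v', hv', w, hw, rfl⟩ := Submodule.mem_sup.mp hx1
        have hπv' : π v' = 0 := by simpa using (hV'1 k hv').2.2
        have hπx : π (v' + w) = w := by
          rw [map_add, hπv', hπW k w hw, zero_add]
        have hπxmem : π (v' + w) ∈ Φ (k - 1) := by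
          have h1 := hπΦW (k - 1) _ hx2
          exact (sup_le (hmono (by omega)) ((hWle (k - 1)).trans inf_le_left)) h1
        have hw0 : w = 0 := by
          have h1 : w ∈ W k ⊓ Φ (k - 1) := ⟨hw, hπx ▸ hπxmem⟩
          rw [hWdisj k] at h1
          simpa using h1
        rw [hw0, add_zero] at hx2 ⊢
        have h1 : v' ∈ V' k ⊓ Φ (k - 1) := ⟨hv', hx2⟩
        rw [hV'4 k] at h1
        exact h1

end Aux

set_option maxHeartbeats 1600000 in
/-- **Filtered isomorphism with the associated graded** (M. Saito,
Proposition 3.7; consequence).  Under the strictness hypothesis there is a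
linear isomorphism `ψ : H ≃ Gr^Φ H` with `ψ (Φ k) = ⊕_{i ≤ k} Φ i / Φ (i-1)`
for all `k` and `ψ ∘ N = Gr(N) ∘ ψ`. -/
theorem exists_graded_iso_of_strict_nilpotent
    {K H : Type*} [Field K] [AddCommGroup H] [Module K H]
    [FiniteDimensional K H]
    (N : H →ₗ[K] H) (hN : IsNilpotent N)
    (Φ : ℤ → Submodule K H) (hmono : Monotone Φ)
    (hsep : ∃ a : ℤ, ∀ i ≤ a, Φ i = ⊥)
    (hexh : ∃ b : ℤ, ∀ i : ℤ, b ≤ i → Φ i = ⊤)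
    (hNΦ : ∀ i : ℤ, (Φ i).map N ≤ Φ (i + 1))
    (hstrict : ∀ j : ℕ, ∀ i : ℤ,
      LinearMap.range (N ^ j) ⊓ Φ (i + j) = (Φ i).map (N ^ j)) :
    ∃ ψ : H ≃ₗ[K] GrMod Φ,
      (∀ k : ℤ, (Φ k).map (ψ : H →ₗ[K] GrMod Φ) =
        ⨆ i ≤ k, LinearMap.range (DirectSum.lof K ℤ (GrPiece Φ) i)) ∧
      (ψ : H →ₗ[K] GrMod Φ).comp N =
        (grN N Φ hNΦ).comp (ψ : H →ₗ[K] GrMod Φ) := by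
  classical
  obtain ⟨a, ha⟩ := hsep
  obtain ⟨b, hb⟩ := hexh
  have hstrictTop : ∀ (j : ℕ) (i : ℤ),
      (⊤ : Submodule K H).map (N ^ j) ⊓ Φ (i + j) ≤ (Φ i ⊓ ⊤).map (N ^ j) := by
    intro j i
    rw [Submodule.map_top, inf_top_eq, hstrict j i]
  obtain ⟨V, hV1, hV2, hV3', hV4⟩ :=
    lemB N hN Φ hmono a b ha hb hNΦ (Module.finrank K H) ⊤
      (le_of_eq (finrank_top K H)) le_top hstrictTop
  have hV1' : ∀ i, V i ≤ Φ i := fun i => (hV1 i).trans inf_le_left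
  have hV3 : ∀ k, Φ k ≤ Φ (k - 1) ⊔ V k := fun k => by
    have h := hV3' k
    rwa [inf_top_eq] at h
  -- Φ k is the sup of the V i for i ≤ k
  have hsupV : ∀ k : ℤ, Φ k = ⨆ i, ⨆ _ : i ≤ k, V i := by
    intro k
    refine le_antisymm ?_ (iSup₂_le fun i hi => (hV1' i).trans (hmono hi))
    rcases le_or_gt k a with hk | hk
    · rw [ha k hk]; exact bot_le
    · have hgen : ∀ k' : ℤ, a ≤ k' → Φ k' ≤ ⨆ i, ⨆ _ : i ≤ k', V i := by
        intro k'
        intro hk'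
        refine Int.le_induction (motive := fun k' _ => Φ k' ≤ ⨆ i, ⨆ _ : i ≤ k', V i) ?_ ?_ k' hk'
        · show Φ a ≤ ⨆ i, ⨆ _ : i ≤ a, V i
          rw [ha a le_rfl]; exact bot_le
        · intro n hn ihn
          show Φ (n + 1) ≤ ⨆ i, ⨆ _ : i ≤ n + 1, V i
          have ihn' : Φ n ≤ ⨆ i, ⨆ _ : i ≤ n, V i := ihn
          have h1 : Φ (n + 1) ≤ Φ n ⊔ V (n + 1) := by
            have := hV3 (n + 1)
            have he : (n : ℤ) + 1 - 1 = n := by ring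
            rwa [he] at this
          refine h1.trans (sup_le ?_ ?_)
          · exact ihn'.trans (biSup_mono fun i hi => by omega)
          · exact le_iSup₂ (f := fun (i : ℤ) (_ : i ≤ n + 1) => V i) (n + 1) le_rfl
      exact hgen k hk.le
  -- vanishing of finite sums
  have hsum0 : ∀ k : ℤ, a ≤ k → ∀ v : ℤ → H, (∀ i, v i ∈ V i) →
      (∑ i ∈ Finset.Icc (a + 1) k, v i) = 0 → ∀ i ∈ Finset.Icc (a + 1) k, v i = 0 := by
    intro k hk
    refine Int.le_induction
      (motive := fun k _ => ∀ v : ℤ → H, (∀ i, v i ∈ V i) →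
        (∑ i ∈ Finset.Icc (a + 1) k, v i) = 0 → ∀ i ∈ Finset.Icc (a + 1) k, v i = 0)
      ?_ ?_ k hk
    · intro v _ _ i hi
      rw [Finset.Icc_eq_empty (by omega)] at hi
      exact absurd hi (Finset.notMem_empty i)
    · intro n hn ihn v hv hsum i hi
      have hins : Finset.Icc (a + 1) (n + 1) = insert (n + 1) (Finset.Icc (a + 1) n) := by
        ext x
        simp only [Finset.mem_Icc, Finset.mem_insert]
        omega
      have hnotmem : (n + 1 : ℤ) ∉ Finset.Icc (a + 1) n := by
        simp only [Finset.mem_Icc]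
        omega
      rw [hins, Finset.sum_insert hnotmem] at hsum
      have hrest : (∑ i ∈ Finset.Icc (a + 1) n, v i) ∈ Φ n :=
        Submodule.sum_mem _ fun i hi => (hmono (Finset.mem_Icc.mp hi).2)
          ((hV1' i) (hv i))
      have hvn1 : v (n + 1) = 0 := by
        have h1 : v (n + 1) ∈ V (n + 1) ⊓ Φ ((n + 1) - 1) := by
          refine ⟨hv (n + 1), ?_⟩
          have he : (n : ℤ) + 1 - 1 = n := by ring
          rw [he]
          have h2 : v (n + 1) = -(∑ i ∈ Finset.Icc (a + 1) n, v i) :=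
            eq_neg_of_add_eq_zero_left hsum
          rw [h2]
          exact neg_mem hrest
        rw [hV4 (n + 1)] at h1
        simpa using h1
      have hrest0 : (∑ i ∈ Finset.Icc (a + 1) n, v i) = 0 := by
        rw [hvn1, zero_add] at hsum
        exact hsum
      rw [hins, Finset.mem_insert] at hi
      rcases hi with rfl | hi
      · exact hvn1
      · exact ihn v hv hrest0 i hi
  -- the comparison maps V i ≃ GrPiece Φ i
  have hVle : ∀ i : ℤ, V i ≤ Φ i := hV1'
  let φmap : ∀ i : ℤ, (V i →ₗ[K] GrPiece Φ i) := fun i =>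
    ((Φ (i - 1)).comap (Φ i).subtype).mkQ ∘ₗ Submodule.inclusion (hVle i)
  have hφinj : ∀ i, Function.Injective (φmap i) := by
    intro i
    rw [← LinearMap.ker_eq_bot, eq_bot_iff]
    intro x hx
    have h1 : (x : H) ∈ Φ (i - 1) := by
      have h2 : φmap i x = 0 := hx
      have h3 : (Submodule.inclusion (hVle i) x) ∈ (Φ (i - 1)).comap (Φ i).subtype :=
        (Submodule.Quotient.mk_eq_zero _).mp h2
      exact Submodule.mem_comap.mp h3
    have h4 : (x : H) ∈ V i ⊓ Φ (i - 1) := ⟨x.2, h1⟩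
    rw [hV4 i] at h4
    have h5 : (x : H) = 0 := by simpa using h4
    simpa using Subtype.ext h5
  have hφsurj : ∀ i, Function.Surjective (φmap i) := by
    intro i y
    obtain ⟨z, hz⟩ := Submodule.mkQ_surjective ((Φ (i - 1)).comap (Φ i).subtype) y
    obtain ⟨p, hp, v, hv, hpv⟩ := Submodule.mem_sup.mp ((hV3 i) z.2)
    refine ⟨⟨v, hv⟩, ?_⟩
    rw [← hz]
    show Submodule.Quotient.mk (Submodule.inclusion (hVle i) ⟨v, hv⟩) = Submodule.Quotient.mk z
    rw [Submodule.Quotient.eq]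
    refine Submodule.mem_comap.mpr ?_
    have hcoe : ((Submodule.inclusion (hVle i) ⟨v, hv⟩ - z : Φ i) : H) = v - z := rfl
    show ((Submodule.inclusion (hVle i) ⟨v, hv⟩ - z : Φ i) : H) ∈ Φ (i - 1)
    rw [hcoe]
    have h6 : v - (z : H) = -p := by rw [← hpv]; abel
    rw [h6]
    exact neg_mem hp
  let eV : ∀ i : ℤ, (V i ≃ₗ[K] GrPiece Φ i) := fun i =>
    LinearEquiv.ofBijective (φmap i) ⟨hφinj i, hφsurj i⟩
  let σ : ∀ i : ℤ, GrPiece Φ i →ₗ[K] H := fun i =>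
    (V i).subtype ∘ₗ ((eV i).symm : GrPiece Φ i →ₗ[K] V i)
  have hσ_apply : ∀ (i : ℤ) (y : GrPiece Φ i), σ i y = ((eV i).symm y : H) := fun _ _ => rfl
  have hσmem : ∀ (i : ℤ) (y : GrPiece Φ i), σ i y ∈ V i := fun i y => ((eV i).symm y).2
  have hσinj : ∀ i, Function.Injective (σ i) := by
    intro i x y hxy
    rw [hσ_apply, hσ_apply] at hxy
    exact (eV i).symm.injective (Subtype.ext hxy)
  have hσrange : ∀ i, LinearMap.range (σ i) = V i := by
    intro i
    apply le_antisymm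
    · rintro _ ⟨y, rfl⟩
      exact hσmem i y
    · intro v hv
      refine ⟨eV i ⟨v, hv⟩, ?_⟩
      rw [hσ_apply, LinearEquiv.symm_apply_apply]
  -- the map g from the graded module to H
  let g : GrMod Φ →ₗ[K] H := DirectSum.toModule K ℤ H σ
  have hglof : ∀ (i : ℤ) (y : GrPiece Φ i),
      g (DirectSum.lof K ℤ (GrPiece Φ) i y) = σ i y := fun i y =>
    DirectSum.toModule_lof K i y
  have hg0 : ∀ x : GrMod Φ, g x = 0 → x = 0 := by
    intro x hx
    by_contra hxne
    have hne : (DFinsupp.support x).Nonempty := by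
      rw [Finset.nonempty_iff_ne_empty]
      intro hemp
      exact hxne (DFinsupp.support_eq_empty.mp hemp)
    set KK : ℤ := max (max a b) ((DFinsupp.support x).max' hne) with hKKdef
    have hKa : a ≤ KK := le_trans (le_max_left a b) (le_max_left _ _)
    set v : ℤ → H := fun i => σ i (x i) with hvdef
    have hvmem : ∀ i, v i ∈ V i := fun i => hσmem _ _
    have hsubset : DFinsupp.support x ⊆ Finset.Icc (a + 1) KK := by
      intro i hi
      rw [Finset.mem_Icc]
      constructor
      · by_contra hia
        push_neg at hia
        have h1 : v i ∈ (⊥ : Submodule K H) := by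
          rw [← ha i (by omega)]
          exact (hV1' i) (hvmem i)
        have h2 : σ i (x i) = σ i 0 := by
          rw [map_zero]
          simpa using h1
        exact (DFinsupp.mem_support_iff.mp hi) (hσinj i h2)
      · exact le_trans (Finset.le_max' _ i hi) (le_max_right _ _)
    have hgx : ∑ i ∈ Finset.Icc (a + 1) KK, v i = 0 := by
      rw [← hx]
      have h1 : ∑ i ∈ Finset.Icc (a + 1) KK, v i = ∑ i ∈ DFinsupp.support x, v i :=
        (Finset.sum_subset hsubset (fun i _ hnot => by
          rw [hvdef]
          simp only
          rw [DFinsupp.notMem_support_iff.mp hnot, map_zero])).symm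
      rw [h1]
      conv_rhs => rw [← DirectSum.sum_support_of x]
      rw [map_sum]
      refine Finset.sum_congr rfl fun i _ => ?_
      rw [← DirectSum.lof_eq_of K, hglof]
    obtain ⟨i, hi⟩ := hne
    have h2 : v i = 0 := hsum0 KK hKa v hvmem hgx i (hsubset hi)
    have h3 : σ i (x i) = σ i 0 := by rw [map_zero]; exact h2
    exact (DFinsupp.mem_support_iff.mp hi) (hσinj i h3)
  have hginj : Function.Injective g := by
    intro x y hxy
    have h1 := hg0 (x - y) (by rw [map_sub, hxy, sub_self])
    exact sub_eq_zero.mp h1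
  have hgsurj : Function.Surjective g := by
    rw [← LinearMap.range_eq_top, eq_top_iff, ← hb b le_rfl, hsupV b]
    refine iSup₂_le fun i _ => ?_
    rw [← hσrange i]
    rintro _ ⟨y, rfl⟩
    exact ⟨DirectSum.lof K ℤ (GrPiece Φ) i y, hglof i y⟩
  let G : GrMod Φ ≃ₗ[K] H := LinearEquiv.ofBijective g ⟨hginj, hgsurj⟩
  have hGg : (G : GrMod Φ →ₗ[K] H) = g := rfl
  refine ⟨G.symm, ?_, ?_⟩
  · -- filtration property
    intro k
    have hmapS : Submodule.map g
        (⨆ i, ⨆ _ : i ≤ k, LinearMap.range (DirectSum.lof K ℤ (GrPiece Φ) i)) = Φ k := by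
      rw [Submodule.map_iSup]
      have h1 : ∀ i : ℤ, Submodule.map g
          (⨆ _ : i ≤ k, LinearMap.range (DirectSum.lof K ℤ (GrPiece Φ) i)) =
          ⨆ _ : i ≤ k, V i := by
        intro i
        rw [Submodule.map_iSup]
        congr 1
        funext hik
        have h2 : g ∘ₗ DirectSum.lof K ℤ (GrPiece Φ) i = σ i :=
          LinearMap.ext fun y => hglof i y
        rw [← LinearMap.range_comp, h2, hσrange i]
      simp_rw [h1]
      exact (hsupV k).symm
    rw [Submodule.map_equiv_eq_comap_symm, LinearEquiv.symm_symm, ← hmapS, hGg,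
      Submodule.comap_map_eq_of_injective hginj]
  · -- compatibility with N
    have hcore : ∀ (i : ℤ) (y : GrPiece Φ i),
        σ (i + 1) (grPieceMap N Φ hNΦ i y) = N (σ i y) := by
      intro i y
      set v : V i := (eV i).symm y with hvdef
      have hy : y = φmap i v := ((eV i).apply_symm_apply y).symm
      have hNv : N (v : H) ∈ V (i + 1) := hV2 i ⟨(v : H), v.2, rfl⟩
      have h1 : grPieceMap N Φ hNΦ i y = φmap (i + 1) ⟨N (v : H), hNv⟩ := by
        rw [hy]
        show Submodule.mapQ _ _ _ _
            (Submodule.Quotient.mk (Submodule.inclusion (hVle i) v)) =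
          Submodule.Quotient.mk (Submodule.inclusion (hVle (i + 1)) ⟨N (v : H), hNv⟩)
        rw [Submodule.mapQ_apply]
        congr 1
      rw [h1]
      show ((eV (i + 1)).symm (φmap (i + 1) ⟨N (v : H), hNv⟩) : H) = N (σ i y)
      have h2 : φmap (i + 1) ⟨N (v : H), hNv⟩ = eV (i + 1) ⟨N (v : H), hNv⟩ := rfl
      rw [h2, LinearEquiv.symm_apply_apply, hσ_apply, ← hvdef]
    have hNg : N ∘ₗ g = g ∘ₗ grN N Φ hNΦ := by
      refine DirectSum.linearMap_ext _ fun i => ?_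
      refine LinearMap.ext fun y => ?_
      simp only [LinearMap.comp_apply]
      rw [hglof]
      have h1 : grN N Φ hNΦ (DirectSum.lof K ℤ (GrPiece Φ) i y) =
          DirectSum.lof K ℤ (GrPiece Φ) (i + 1) (grPieceMap N Φ hNΦ i y) := by
        rw [grN, DirectSum.toModule_lof]
        rfl
      rw [h1, hglof, hcore]
    refine LinearMap.ext fun x => ?_
    simp only [LinearMap.comp_apply, LinearEquiv.coe_coe]
    apply G.injective
    have h1 : G (G.symm (N x)) = N x := G.apply_symm_apply _
    have h2 : ∀ z : GrMod Φ, G z = g z := fun z => rfl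
    rw [h1, h2, ← LinearMap.comp_apply, ← hNg]
    simp only [LinearMap.comp_apply]
    rw [← h2 (G.symm x), G.apply_symm_apply]
end

section
/- Let K be a field of characteristic 0, let n, d ≥ 1, and let v : Fin d → (Fin n → ℤ) be a family of integer vectors whose images in ℚⁿ (i.e. the vectors (v j k : ℚ)_{k}) are linearly independent over ℚ. Let a : Fin d → K with a j ≠ 0 for all j, and let t : Fin n → K with t k ≠ 0 for all k. Then there exists an index i ∈ Fin n such that Σ_{j ∈ Fin d} (v j i : K) · a j · Π_{k ∈ Fin n} (t k)^{v j k} ≠ 0, where (t k)^{v j k} denotes the integer power (zpow) in the field K. (This says that the equations t_1 ∂f_F/∂t_1 = ⋯ = t_n ∂f_F/∂t_n = 0, for the Laurent polynomial f_F = Σ_j a_j t^{v_j} supported on a face with linearly independent vertices, have no solution in the algebraic torus, which is the key step in proving that f_{P,𝐚} is non-degenerate.) -/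
open Matrix

/-- **Non-vanishing of the logarithmic derivatives on a simplicial face.**
Let `K` be a field of characteristic `0`, and let `v : Fin d → (Fin n → ℤ)` be
integer vectors which are linearly independent over `ℚ`.  For any nonzero
coefficients `a j` and any point `t` of the torus `(K^*)^n`, some logarithmic
partial derivative `t_i ∂f_F/∂t_i = Σ_j (v j)_i a_j t^{v j}` of the face
polynomial `f_F = Σ_j a_j t^{v j}` is nonzero at `t`. -/
theorem exists_log_deriv_ne_zero_of_linearIndependent
    {K : Type*} [Field K] [CharZero K] (n d : ℕ) (hn : 1 ≤ n) (hd : 1 ≤ d)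
    (v : Fin d → Fin n → ℤ)
    (hv : LinearIndependent ℚ (fun j : Fin d => fun k : Fin n => (v j k : ℚ)))
    (a : Fin d → K) (ha : ∀ j, a j ≠ 0)
    (t : Fin n → K) (ht : ∀ k, t k ≠ 0) :
    ∃ i : Fin n,
      ∑ j : Fin d, (v j i : K) * a j * ∏ k : Fin n, t k ^ (v j k) ≠ 0 := by
  by_contra h
  push_neg at h
  -- nonzero coefficients
  set c : Fin d → K := fun j => a j * ∏ k : Fin n, t k ^ (v j k) with hc
  have hc0 : ∀ j, c j ≠ 0 := fun j =>
    mul_ne_zero (ha j) (Finset.prod_ne_zero_iff.2 fun k _ => zpow_ne_zero _ (ht k))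
  -- the matrix over K and the vanishing relation
  set MK : Matrix (Fin d) (Fin n) K := Matrix.of fun j i => (v j i : K) with hMKdef
  have hMK : c ᵥ* MK = 0 := by
    funext i
    have := h i
    simp only [Matrix.vecMul, dotProduct, Matrix.of_apply, Pi.zero_apply, hMKdef, hc]
    rw [← this]
    exact Finset.sum_congr rfl fun j _ => by ring
  -- integer Gram matrix
  set GZ : Matrix (Fin d) (Fin d) ℤ :=
    Matrix.of fun j j' => ∑ k : Fin n, v j k * v j' k with hGZdef
  -- its determinant is nonzero, via the rational Gram matrix
  set MQ : Matrix (Fin d) (Fin n) ℚ := Matrix.of fun j i => (v j i : ℚ) with hMQdef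
  have hGQ : GZ.map (Int.cast : ℤ → ℚ) = MQ * MQᵀ := by
    ext j j'
    simp [hGZdef, hMQdef, Matrix.mul_apply]
  have hdetGZ : GZ.det ≠ 0 := by
    intro h0
    have hdetGQ : (GZ.map (Int.cast : ℤ → ℚ)).det = 0 := by
      rw [show GZ.map (Int.cast : ℤ → ℚ) =
        (Int.castRingHom ℚ).mapMatrix GZ from rfl, ← RingHom.map_det, h0]; simp
    obtain ⟨c', hc'ne, hc'⟩ := Matrix.exists_vecMul_eq_zero_iff.2 hdetGQ
    rw [hGQ] at hc'
    have hw : c' ᵥ* MQ = 0 := by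
      have hdot : (c' ᵥ* MQ) ⬝ᵥ (c' ᵥ* MQ) = 0 := by
        have : c' ᵥ* (MQ * MQᵀ) = (c' ᵥ* MQ) ᵥ* MQᵀ := by
          rw [Matrix.vecMul_vecMul]
        rw [this] at hc'
        calc (c' ᵥ* MQ) ⬝ᵥ (c' ᵥ* MQ) = (c' ᵥ* MQ) ⬝ᵥ (MQᵀ *ᵥ c') := by
              rw [Matrix.mulVec_transpose]
          _ = ((c' ᵥ* MQ) ᵥ* MQᵀ) ⬝ᵥ c' := by rw [Matrix.dotProduct_mulVec]
          _ = 0 := by rw [hc', zero_dotProduct]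
      exact dotProduct_self_eq_zero.1 hdot
    have := Fintype.linearIndependent_iff.1 hv c' ?_
    · exact hc'ne (funext fun j => this j)
    · funext k
      have := congrFun hw k
      simpa [Matrix.vecMul, dotProduct, hMQdef, Finset.sum_apply] using this
  -- the Gram matrix over K is invertible
  set GK : Matrix (Fin d) (Fin d) K := GZ.map (Int.cast : ℤ → K) with hGKdef
  have hdetGK : GK.det ≠ 0 := by
    rw [show GK = (Int.castRingHom K).mapMatrix GZ from rfl, ← RingHom.map_det]
    exact_mod_cast Int.cast_ne_zero.2 hdetGZ
  have hGK : GK = MK * MKᵀ := by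
    ext j j'
    simp [hGKdef, hGZdef, hMKdef, Matrix.mul_apply]
  -- conclude c = 0, contradiction
  have hczero : c = 0 := by
    have hinj := Matrix.vecMul_injective_iff_isUnit.2 ((Matrix.isUnit_iff_isUnit_det GK).2 (isUnit_iff_ne_zero.2 hdetGK))
    apply hinj
    show c ᵥ* GK = (0 : Fin d → K) ᵥ* GK
    rw [hGK, ← Matrix.vecMul_vecMul, hMK, Matrix.zero_vecMul, Matrix.zero_vecMul]
  exact hc0 ⟨0, hd⟩ (by rw [hczero]; rfl)
end

section
/- Let K be a field of characteristic 0 and n ≥ 1. Let S be a finite set of integer vectors in Fin n → ℤ, let ι : (Fin n → ℤ) → (Fin n → ℝ) be the canonical map, and let P = convexHull ℝ (ι '' S) ⊆ ℝⁿ. Let a : (Fin n → ℤ) → K satisfy a v ≠ 0 for all v ∈ S. Assume: (i) 0 lies in the interior of P; (ii) for every nonempty exposed face F of P with F ≠ P, the set T_F = {v ∈ S : ι v ∈ F} is nonempty with F = convexHull ℝ (ι '' T_F), and the family (ι v)_{v ∈ T_F} is linearly independent over ℝ (this holds when P is a simplicial polytope with vertex set ι '' S). Then the Laurent polynomial f_{P,𝐚}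 = Σ_{v ∈ S} a_v t^v is non-degenerate: for every nonempty exposed face F of P with F ≠ P and every t : Fin n → K with t k ≠ 0 for all k, there exists i ∈ Fin n such that Σ_{v ∈ T_F} (v i : K) · a_v · Π_{k} (t k)^{v k} ≠ 0. -/
open scoped Classical

/-- **Non-degeneracy of `f_{P,𝐚}`** (Lemma on simplicial Newton polytopes).
Let `S` be a finite set of integer exponent vectors, `ι` the canonical map to
`ℝⁿ`, and `P = conv(ι(S))`.  Assume `0 ∈ int P` and that each proper nonempty
exposed face `F` of `P` is the convex hull of the (nonempty) set of points of
`ι(S)` lying on it, these points being linearly independent over `ℝ`.  Then for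
every such face `F` and every point `t` of the torus `(K^*)^n`, some logarithmic
derivative `t_i ∂f_F/∂t_i` of the face polynomial `f_F = Σ_{v ∈ S, ι v ∈ F} a_v t^v`
is nonzero at `t`: the Laurent polynomial `f_{P,𝐚}` is non-degenerate. -/
theorem nondegenerate_of_simplicial_newton_polytope
    {K : Type*} [Field K] [CharZero K] (n : ℕ) (hn : 1 ≤ n)
    (S : Finset (Fin n → ℤ))
    (a : (Fin n → ℤ) → K) (ha : ∀ v ∈ S, a v ≠ 0)
    (P : Set (Fin n → ℝ))
    (hP : P = convexHull ℝ ((fun v : Fin n → ℤ => fun k : Fin n => (v k : ℝ)) '' ↑S))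
    (h0 : (0 : Fin n → ℝ) ∈ interior P)
    (hface : ∀ F : Set (Fin n → ℝ), IsExposed ℝ P F → F.Nonempty → F ≠ P →
      (S.filter (fun v : Fin n → ℤ => (fun k : Fin n => (v k : ℝ)) ∈ F)).Nonempty ∧
      F = convexHull ℝ ((fun v : Fin n → ℤ => fun k : Fin n => (v k : ℝ)) ''
        ↑(S.filter (fun v : Fin n → ℤ => (fun k : Fin n => (v k : ℝ)) ∈ F))) ∧
      LinearIndependent ℝ
        (fun v : {v : Fin n → ℤ // v ∈ S ∧ (fun k : Fin n => (v k : ℝ)) ∈ F} =>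
          fun k : Fin n => ((v : Fin n → ℤ) k : ℝ))) :
    ∀ F : Set (Fin n → ℝ), IsExposed ℝ P F → F.Nonempty → F ≠ P →
      ∀ t : Fin n → K, (∀ k, t k ≠ 0) →
        ∃ i : Fin n,
          ∑ v ∈ S.filter (fun v : Fin n → ℤ => (fun k : Fin n => (v k : ℝ)) ∈ F),
            (v i : K) * a v * ∏ k : Fin n, t k ^ (v k) ≠ 0 := by
  intro F hF hFne hFP t ht
  by_contra hcon
  push_neg at hcon
  obtain ⟨hTne, -, hli⟩ := hface F hF hFne hFP
  set T := S.filter (fun v : Fin n → ℤ => (fun k : Fin n => (v k : ℝ)) ∈ F) with hT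
  -- index type
  set ιT := {v : Fin n → ℤ // v ∈ S ∧ (fun k : Fin n => (v k : ℝ)) ∈ F} with hιT
  set w := (fun v : ιT => fun k : Fin n => ((v : Fin n → ℤ) k : ℚ)) with hw
  -- linear independence over ℚ
  have hliQ : LinearIndependent ℚ w := by
    rw [linearIndependent_iff'] at hli ⊢
    intro s g hg i hi
    have key : ∑ j ∈ s, ((g j : ℝ)) • (fun k : Fin n => (((j : Fin n → ℤ)) k : ℝ)) = 0 := by
      funext k
      have h1 := congrFun hg k
      simp only [Finset.sum_apply, Pi.smul_apply, smul_eq_mul, Pi.zero_apply, hw] at h1 ⊢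
      exact_mod_cast h1
    exact_mod_cast hli s (fun j => (g j : ℝ)) key i hi
  have hinj : Function.Injective w := hliQ.injective
  have hsr : LinearIndepOn ℚ id (Set.range w) := (linearIndepOn_id_range_iff hinj).mpr hliQ
  let B := Module.Basis.extend hsr
  have hmem : ∀ v : ιT, w v ∈ hsr.extend (Set.subset_univ _) :=
    fun v => hsr.subset_extend _ ⟨v, rfl⟩
  let φ := fun v : ιT => B.coord ⟨w v, hmem v⟩
  have hφ : ∀ v u : ιT, φ u (w v) = if v = u then 1 else 0 := by
    intro v u
    have h1 : w v = B ⟨w v, hmem v⟩ := (Module.Basis.extend_apply_self hsr ⟨w v, hmem v⟩).symm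
    rw [h1]
    show B.coord _ _ = _
    rw [Module.Basis.coord_apply, Module.Basis.repr_self, Finsupp.single_apply]
    simp [Subtype.ext_iff, hinj.eq_iff]
  -- pick v0
  obtain ⟨v0, hv0⟩ := hTne
  have hv0' := Finset.mem_filter.mp hv0
  set j0 : ιT := ⟨v0, hv0'.1, hv0'.2⟩ with hj0
  set c : (Fin n → ℤ) → K := fun v => a v * ∏ k : Fin n, t k ^ (v k) with hc
  set u : Fin n → ℚ := fun k => φ j0 (fun j => if k = j then 1 else 0) with hu
  -- For v ∈ T, φ j0 (cast v) = δ
  have hδ : ∀ v ∈ T, (φ j0 (fun k : Fin n => ((v k : ℚ))) : ℚ) = if v = v0 then 1 else 0 := by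
    intro v hv
    have hv' := Finset.mem_filter.mp hv
    have := hφ ⟨v, hv'.1, hv'.2⟩ j0
    rw [hw] at this
    simp only [hw] at this
    rw [this]
    congr 1
    exact propext ⟨fun h => congrArg Subtype.val h, fun h => Subtype.ext h⟩
  have key1 : ∑ v ∈ T, c v * ((φ j0 (fun k : Fin n => ((v k : ℚ))) : ℚ) : K) = c v0 := by
    rw [Finset.sum_congr rfl (fun v hv => by rw [hδ v hv])]
    simp only [apply_ite (fun q : ℚ => (q : K)), Rat.cast_one, Rat.cast_zero,
      mul_ite, mul_one, mul_zero]
    rw [Finset.sum_ite_eq' T v0 c]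
    simp [hv0]
  have key2 : ∑ v ∈ T, c v * ((φ j0 (fun k : Fin n => ((v k : ℚ))) : ℚ) : K) = 0 := by
    have hrep : ∀ v : Fin n → ℤ, (φ j0 (fun k : Fin n => ((v k : ℚ))) : ℚ)
        = ∑ k : Fin n, (v k : ℚ) * u k := by
      intro v
      rw [LinearMap.pi_apply_eq_sum_univ (φ j0) (fun k : Fin n => ((v k : ℚ)))]
      simp [hu, smul_eq_mul]
    calc ∑ v ∈ T, c v * ((φ j0 (fun k : Fin n => ((v k : ℚ))) : ℚ) : K)
        = ∑ v ∈ T, ∑ k : Fin n, (u k : K) * ((v k : K) * a v * ∏ j : Fin n, t j ^ (v j)) := by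
          refine Finset.sum_congr rfl fun v hv => ?_
          rw [hrep v]
          push_cast
          rw [Finset.mul_sum]
          refine Finset.sum_congr rfl fun k _ => ?_
          simp only [hc]
          ring
      _ = ∑ k : Fin n, (u k : K) * ∑ v ∈ T, (v k : K) * a v * ∏ j : Fin n, t j ^ (v j) := by
          rw [Finset.sum_comm]
          exact Finset.sum_congr rfl fun k _ => (Finset.mul_sum _ _ _).symm
      _ = 0 := by
          simp [hcon]
  have hcv0 : c v0 ≠ 0 := by
    refine mul_ne_zero (ha v0 hv0'.1) (Finset.prod_ne_zero_iff.mpr fun k _ => ?_)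
    exact zpow_ne_zero _ (ht k)
  exact hcv0 (key1.symm.trans key2)
end

section
/- Let E be a real normed vector space and let P ⊆ E be a convex compact set with 0 in its interior. Write g = gauge P for the Minkowski functional of P (so g(x) > 0 for x ≠ 0). Then for all nonzero u, w ∈ E: g(u + w) = g(u) + g(w) if and only if g( (1/2) • (g(u))⁻¹ • u + (1/2) • (g(w))⁻¹ • w ) = 1, i.e. if and only if the midpoint of the radial projections of u and w to the boundary of P lies on the boundary of P. (For a lattice polytope P this is the criterion that two exponents are 'cofacial', i.e. lie in a common cone over a face of P, which governs the multiplication rule t^u · t^w = t^{u+w} or 0 in the Newton-graded ring Gr^{𝒩} K[t^{±1}].) -/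
open Set Filter Topology

private lemma gauge_segment_eq_one
    {E : Type*} [NormedAddCommGroup E] [NormedSpace ℝ E]
    {P : Set E} (hP : Convex ℝ P) (habs : Absorbent ℝ P)
    {x y : E} (hx : gauge P x = 1) {t s : ℝ}
    (hs0 : 0 < s) (hs1 : s < 1) (ht0 : 0 < t) (ht1 : t < 1) (hst : s < t)
    (h : gauge P (t • x + (1 - t) • y) = 1)
    (hyle : gauge P y ≤ 1) :
    gauge P (s • x + (1 - s) • y) = 1 := by
  set lam : ℝ := (1 - t) / (1 - s) with hlam
  have hs1' : (0:ℝ) < 1 - s := by linarith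
  have ht1' : (0:ℝ) < 1 - t := by linarith
  have hlam0 : 0 < lam := by positivity
  have hlam1 : lam < 1 := by
    rw [hlam, div_lt_one hs1']; linarith
  have key : t • x + (1 - t) • y = lam • (s • x + (1 - s) • y) + (1 - lam) • x := by
    rw [smul_add, smul_smul, smul_smul]
    have h1 : lam * s + (1 - lam) = t := by
      rw [hlam, div_mul_eq_mul_div, one_sub_div hs1'.ne', ← add_div, div_eq_iff hs1'.ne']; ring
    have h2 : lam * (1 - s) = 1 - t := by
      rw [hlam, div_mul_cancel₀ _ hs1'.ne']
    rw [h2]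
    have : t • x = (lam * s) • x + (1 - lam) • x := by
      rw [← add_smul, h1]
    rw [this]; abel
  -- upper bound for f(s)
  have hle : gauge P (s • x + (1 - s) • y) ≤ 1 := by
    calc gauge P (s • x + (1 - s) • y)
        ≤ gauge P (s • x) + gauge P ((1 - s) • y) := gauge_add_le hP habs _ _
      _ = s * gauge P x + (1 - s) * gauge P y := by
          rw [gauge_smul_of_nonneg hs0.le, gauge_smul_of_nonneg hs1'.le]; rfl
      _ ≤ s * 1 + (1 - s) * 1 := by
          nlinarith [hx.le, hyle, hs0.le, hs1'.le]
      _ = 1 := by ring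
  have hge : 1 ≤ gauge P (s • x + (1 - s) • y) := by
    have := gauge_add_le hP habs (lam • (s • x + (1 - s) • y)) ((1 - lam) • x)
    rw [← key, h, gauge_smul_of_nonneg hlam0.le, gauge_smul_of_nonneg (by linarith : (0:ℝ) ≤ 1 - lam), smul_eq_mul, smul_eq_mul, hx, mul_one] at this
    nlinarith [this]
  linarith

/-- **Cofaciality criterion via the gauge (Newton degree) function.**
Let `P` be a convex compact set with `0` in its interior in a real normed
space, and `g = gauge P` its Minkowski functional.  For nonzero `u, w`, the
gauge is additive on `u, w` (i.e. `deg_P(u+w) = deg_P(u) + deg_P(w)`, the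
cofaciality condition governing `t^u · t^w` in `Gr^𝒩 K[t^{±1}]`) iff the
midpoint of the radial projections of `u` and `w` to the boundary of `P` lies
on the boundary, i.e. has gauge `1`. -/
theorem gauge_add_eq_iff_midpoint_radial_proj
    {E : Type*} [NormedAddCommGroup E] [NormedSpace ℝ E]
    (P : Set E) (hP : Convex ℝ P) (hPc : IsCompact P)
    (h0 : (0 : E) ∈ interior P)
    (u w : E) (hu : u ≠ 0) (hw : w ≠ 0) :
    gauge P (u + w) = gauge P u + gauge P w ↔
      gauge P ((1 / 2 : ℝ) • (gauge P u)⁻¹ • u +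
        (1 / 2 : ℝ) • (gauge P w)⁻¹ • w) = 1 := by
  have hnhds : P ∈ 𝓝 (0 : E) := mem_interior_iff_mem_nhds.1 h0
  have habs : Absorbent ℝ P := absorbent_nhds_zero hnhds
  have hbdd : Bornology.IsVonNBounded ℝ P := hPc.totallyBounded.isVonNBounded ℝ
  have hpos : ∀ x : E, x ≠ 0 → 0 < gauge P x := fun x hx =>
    (gauge_pos habs hbdd).2 hx
  set a := gauge P u with ha'
  set b := gauge P w with hb'
  have ha : 0 < a := hpos u hu
  have hb : 0 < b := hpos w hw
  set x := a⁻¹ • u with hx'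
  set y := b⁻¹ • w with hy'
  have hgx : gauge P x = 1 := by
    rw [hx', gauge_smul_of_nonneg (inv_nonneg.mpr ha.le), smul_eq_mul, ← ha',
      inv_mul_cancel₀ ha.ne']
  have hgy : gauge P y = 1 := by
    rw [hy', gauge_smul_of_nonneg (inv_nonneg.mpr hb.le), smul_eq_mul, ← hb',
      inv_mul_cancel₀ hb.ne']
  set t : ℝ := a / (a + b) with ht'
  have hab : 0 < a + b := by linarith
  have ht0 : 0 < t := by positivity
  have ht1 : t < 1 := by rw [ht', div_lt_one hab]; linarith
  have h1t : 1 - t = b / (a + b) := by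
    rw [eq_div_iff hab.ne', sub_mul, one_mul, ht', div_mul_cancel₀ _ hab.ne']; ring
  have hax : a • x = u := by rw [hx', smul_smul, mul_inv_cancel₀ ha.ne', one_smul]
  have hby : b • y = w := by rw [hy', smul_smul, mul_inv_cancel₀ hb.ne', one_smul]
  have hsum : u + w = (a + b) • (t • x + (1 - t) • y) := by
    simp only [hx', hy', ht']
    match_scalars <;> field_simp <;> ring
  have hguv : gauge P (u + w) = (a + b) * gauge P (t • x + (1 - t) • y) := by
    rw [hsum, gauge_smul_of_nonneg hab.le, smul_eq_mul]
  have half0 : (0:ℝ) < 1/2 := by norm_num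
  have half1 : (1/2 : ℝ) < 1 := by norm_num
  have hmid : (1 / 2 : ℝ) • (gauge P u)⁻¹ • u + (1 / 2 : ℝ) • (gauge P w)⁻¹ • w
      = (1/2 : ℝ) • x + (1 - 1/2 : ℝ) • y := by
    norm_num [hx', hy']
    rfl
  rw [hmid]
  constructor
  · intro h
    have hft : gauge P (t • x + (1 - t) • y) = 1 := by
      have h2 : (a + b) * gauge P (t • x + (1 - t) • y) = (a + b) * 1 := by
        rw [mul_one, ← hguv]; exact h
      exact mul_left_cancel₀ hab.ne' h2
    rcases lt_trichotomy (1/2 : ℝ) t with hlt | heq | hgt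
    · exact gauge_segment_eq_one hP habs hgx half0 half1 ht0 ht1 hlt hft hgy.le
    · rw [← heq] at hft; exact hft
    · -- t < 1/2 : swap roles of x and y
      have hswap : t • x + (1 - t) • y = (1 - t) • y + (1 - (1 - t)) • x := by
        rw [sub_sub_cancel, add_comm]
      have hswap2 : (1/2 : ℝ) • x + (1 - 1/2 : ℝ) • y
          = (1/2 : ℝ) • y + (1 - 1/2 : ℝ) • x := by
        rw [show (1 - 1/2 : ℝ) = 1/2 by norm_num, add_comm]
      rw [hswap2]
      rw [hswap] at hft
      exact gauge_segment_eq_one hP habs hgy half0 half1 (by linarith) (by linarith)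
        (by linarith) hft hgx.le
  · intro h
    have hft : gauge P (t • x + (1 - t) • y) = 1 := by
      rcases lt_trichotomy t (1/2 : ℝ) with hlt | heq | hgt
      · exact gauge_segment_eq_one hP habs hgx ht0 ht1 half0 half1 hlt h hgy.le
      · rw [heq]; exact h
      · have hswap : t • x + (1 - t) • y = (1 - t) • y + (1 - (1 - t)) • x := by
          rw [sub_sub_cancel, add_comm]
        have hswap2 : (1/2 : ℝ) • x + (1 - 1/2 : ℝ) • y
            = (1/2 : ℝ) • y + (1 - 1/2 : ℝ) • x := by
          rw [show (1 - 1/2 : ℝ) = 1/2 by norm_num, add_comm]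
        rw [hswap2] at h
        rw [hswap]
        exact gauge_segment_eq_one hP habs hgy (by linarith) (by linarith) half0 half1
          (by linarith) h hgx.le
    rw [hguv, hft, mul_one]
end
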